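/- arXiv:2403.05657 — 4 statements merged into one kernel-verified Lean document; each statement's English description precedes it below -/
import Mathlib

section
/- Let (X_n)_{n ≥ 0} be an i.i.d. sequence of integer-valued random variables with ℙ[X_0 ≥ -1] = 1, integrable and with E[X_0] < 0. Let τ = inf{n > 0 : S_n ≥ 0} be the weak upper record epoch of the associated skip-free to the left random walk. Then for every integer k ≥ 0, ℙ[τ < ∞, X_{τ-1} = k] = (k+1) · ℙ[X_0 = k]. -/
open MeasureTheory ProbabilityTheory Filter Topology
open scoped ENNReal

namespace RecordAux

variable {Ω : Type*} [MeasurableSpace Ω] {μ : Measure Ω} [IsProbabilityMeasure μ]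
  {X : ℕ → Ω → ℤ}

def S (X : ℕ → Ω → ℤ) (n : ℕ) (ω : Ω) : ℤ := ∑ l ∈ Finset.range n, X l ω

lemma measurable_S (hmeas : ∀ n, Measurable (X n)) (n : ℕ) : Measurable (S X n) :=
  Finset.measurable_sum _ fun l _ => hmeas l

def PS (n i : ℕ) (f : Fin n → ℤ) : ℤ :=
  ∑ l ∈ Finset.range i, if h : l < n then f ⟨l, h⟩ else 0

lemma measurable_PS (n i : ℕ) : Measurable (PS n i) := by
  apply Finset.measurable_sum
  intro l _
  by_cases h : l < n
  · simpa [h] using measurable_pi_apply (⟨l, h⟩ : Fin n)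
  · simpa [h] using measurable_const

lemma PS_id (n i : ℕ) (hi : i ≤ n) (ω : Ω) :
    PS n i (fun j : Fin n => X (j : ℕ) ω) = S X i ω := by
  refine Finset.sum_congr rfl fun l hl => ?_
  have : l < n := lt_of_lt_of_le (Finset.mem_range.1 hl) hi
  simp [this]

lemma PS_rev (n i : ℕ) (hi : i ≤ n) (ω : Ω) :
    PS n i (fun j : Fin n => X (n - 1 - (j : ℕ)) ω) = S X n ω - S X (n - i) ω := by
  have h1 : PS n i (fun j : Fin n => X (n - 1 - (j : ℕ)) ω)
      = ∑ l ∈ Finset.range i, X (n - 1 - l) ω := by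
    refine Finset.sum_congr rfl fun l hl => ?_
    have : l < n := lt_of_lt_of_le (Finset.mem_range.1 hl) hi
    simp [this]
  have h2 : ∑ l ∈ Finset.range i, X (n - 1 - l) ω = ∑ l ∈ Finset.Ico (n - i) n, X l ω := by
    refine Finset.sum_nbij' (fun l => n - 1 - l) (fun l => n - 1 - l) ?_ ?_ ?_ ?_ ?_
    · intro l hl
      simp only [Finset.mem_range] at hl
      simp only [Finset.mem_Ico]
      omega
    · intro l hl
      simp only [Finset.mem_Ico] at hl
      simp only [Finset.mem_range]
      omega
    · intro l hl
      simp only [Finset.mem_range] at hl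
      show n - 1 - (n - 1 - l) = l
      omega
    · intro l hl
      simp only [Finset.mem_Ico] at hl
      show n - 1 - (n - 1 - l) = l
      omega
    · intro l hl
      rfl
  have h3 : S X (n - i) ω + ∑ l ∈ Finset.Ico (n - i) n, X l ω = S X n ω := by
    unfold S
    rw [Finset.sum_range_add_sum_Ico _ (by omega : n - i ≤ n)]
  omega

lemma map_tuple (hmeas : ∀ n, Measurable (X n))
    (hindep : iIndepFun X μ)
    (hident : ∀ n, IdentDistrib (X n) (X 0) μ μ)
    (n : ℕ) (g : Fin n → ℕ) (hg : Function.Injective g) :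
    Measure.map (fun ω (i : Fin n) => X (g i) ω) μ
      = Measure.pi (fun _ : Fin n => Measure.map (X 0) μ) := by
  refine (Measure.pi_eq fun s hs => ?_).symm
  rw [Measure.map_apply (measurable_pi_lambda _ fun i => hmeas (g i))
    (MeasurableSet.univ_pi hs)]
  classical
  set sets : ℕ → Set ℤ := fun m => ⋂ (i : Fin n) (_ : g i = m), s i with hsets
  have hsets_g : ∀ i : Fin n, sets (g i) = s i := by
    intro i
    apply Set.eq_of_subset_of_subset
    · intro z hz
      simp only [hsets, Set.mem_iInter] at hz
      exact hz i rfl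
    · intro z hz
      simp only [hsets, Set.mem_iInter]
      intro i' hi'
      rwa [hg hi']
  have hpre : (fun ω (i : Fin n) => X (g i) ω) ⁻¹' Set.pi Set.univ s
      = ⋂ m ∈ Finset.image g Finset.univ, X m ⁻¹' sets m := by
    ext ω
    simp only [Set.mem_preimage, Set.mem_pi, Set.mem_univ, true_implies, Set.mem_iInter,
      Finset.mem_image, Finset.mem_univ, true_and]
    constructor
    · rintro h m ⟨i, rfl⟩
      rw [hsets_g i]; exact h i
    · intro h i
      have := h (g i) ⟨i, rfl⟩
      rw [hsets_g i] at this; exact this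
  rw [hpre, hindep.measure_inter_preimage_eq_mul _ (fun m _ => MeasurableSet.of_discrete),
    Finset.prod_image (fun i _ j _ h => hg h)]
  refine Finset.prod_congr rfl fun i _ => ?_
  rw [hsets_g i, (hident (g i)).measure_mem_eq MeasurableSet.of_discrete,
    Measure.map_apply (hmeas 0) MeasurableSet.of_discrete]

lemma measure_tuple_preimage (hmeas : ∀ n, Measurable (X n))
    (hindep : iIndepFun X μ)
    (hident : ∀ n, IdentDistrib (X n) (X 0) μ μ)
    (n : ℕ) (g : Fin n → ℕ) (hg : Function.Injective g)
    (E : Set (Fin n → ℤ)) (hE : MeasurableSet E) :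
    μ ((fun ω (i : Fin n) => X (g i) ω) ⁻¹' E)
      = Measure.pi (fun _ : Fin n => Measure.map (X 0) μ) E := by
  rw [← map_tuple hmeas hindep hident n g hg,
    Measure.map_apply (measurable_pi_lambda _ fun i => hmeas (g i)) hE]

lemma factorization (hmeas : ∀ n, Measurable (X n))
    (hindep : iIndepFun X μ)
    (hident : ∀ n, IdentDistrib (X n) (X 0) μ μ)
    (N : ℕ) (E : Set (Fin N → ℤ)) (hE : MeasurableSet E) (c : ℤ) :
    μ ((fun ω (i : Fin N) => X (i : ℕ) ω) ⁻¹' E ∩ X N ⁻¹' {c})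
      = μ ((fun ω (i : Fin N) => X (i : ℕ) ω) ⁻¹' E) * μ (X 0 ⁻¹' {c}) := by
  classical
  set ν : Measure ℤ := Measure.map (X 0) μ with hν
  set e := MeasurableEquiv.piFinSuccAbove (fun _ : Fin (N + 1) => ℤ) (Fin.last N) with he
  have hEc : MeasurableSet (({c} : Set ℤ) ×ˢ E) := MeasurableSet.of_discrete.prod hE
  have hE' : MeasurableSet (e ⁻¹' (({c} : Set ℤ) ×ˢ E)) := e.measurable hEc
  have hpre : (fun ω (i : Fin (N + 1)) => X (i : ℕ) ω) ⁻¹' (e ⁻¹' (({c} : Set ℤ) ×ˢ E))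
      = (fun ω (i : Fin N) => X (i : ℕ) ω) ⁻¹' E ∩ X N ⁻¹' {c} := by
    ext ω
    have heval : e (fun i : Fin (N + 1) => X (i : ℕ) ω) = (X N ω, fun j : Fin N => X (j : ℕ) ω) := by
      have h0 : e (fun i : Fin (N + 1) => X (i : ℕ) ω)
          = ((fun i : Fin (N + 1) => X (i : ℕ) ω) (Fin.last N),
             fun j : Fin N => (fun i : Fin (N + 1) => X (i : ℕ) ω) ((Fin.last N).succAbove j)) := rfl
      rw [h0]
      refine Prod.ext ?_ ?_
      · simp [Fin.val_last]
      · funext j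
        simp [Fin.succAbove_last_apply]
    simp only [Set.mem_preimage, heval, Set.mem_prod, Set.mem_singleton_iff, Set.mem_inter_iff]
    tauto
  have h1 := measure_tuple_preimage (μ := μ) hmeas hindep hident (N + 1)
    (fun i : Fin (N + 1) => (i : ℕ)) Fin.val_injective _ hE'
  have h2 := (measurePreserving_piFinSuccAbove (fun _ : Fin (N + 1) => ν)
    (Fin.last N)).measure_preimage hEc.nullMeasurableSet
  have h3 := measure_tuple_preimage (μ := μ) hmeas hindep hident N
    (fun i : Fin N => (i : ℕ)) Fin.val_injective E hE
  have h4 : ν ({c} : Set ℤ) = μ (X 0 ⁻¹' {c}) := by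
    rw [hν, Measure.map_apply (hmeas 0) MeasurableSet.of_discrete]
  rw [← hpre, h1, h2, Measure.prod_prod, h4, ← h3, mul_comm]

/-- a.s. the walk hits level `-j` for the first time exactly at `-j` -/
lemma hits (hindep : iIndepFun X μ)
    (hident : ∀ n, IdentDistrib (X n) (X 0) μ μ)
    (hskip : ∀ᵐ ω ∂μ, -1 ≤ X 0 ω)
    (hint : Integrable (fun ω => (X 0 ω : ℝ)) μ)
    (hmean : ∫ ω, (X 0 ω : ℝ) ∂μ < 0)
    (j : ℕ) (hj : 0 < j) :
    μ {ω | ∃ m, S X m ω = -(j : ℤ) ∧ ∀ l, l < m → -(j : ℤ) < S X l ω} = 1 := by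
  set c : ℝ := ∫ ω, (X 0 ω : ℝ) ∂μ with hc
  have hskip' : ∀ᵐ ω ∂μ, ∀ n, -1 ≤ X n ω := by
    rw [ae_all_iff]
    intro n
    have h0 : μ (X n ⁻¹' {z : ℤ | ¬(-1 ≤ z)}) = μ (X 0 ⁻¹' {z : ℤ | ¬(-1 ≤ z)}) :=
      (hident n).measure_mem_eq MeasurableSet.of_discrete
    have h1 : μ (X 0 ⁻¹' {z : ℤ | ¬(-1 ≤ z)}) = 0 := by
      exact ae_iff.1 hskip
    rw [ae_iff]
    exact h0.trans h1
  have hslln : ∀ᵐ ω ∂μ, Tendsto (fun n : ℕ => (∑ i ∈ Finset.range n, (X i ω : ℝ)) / n)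
      atTop (𝓝 c) := by
    have := strong_law_ae_real (μ := μ) (fun n ω => (X n ω : ℝ)) hint
      (fun i j hij => (hindep.indepFun hij).comp
        (Measurable.of_discrete (f := (Int.cast : ℤ → ℝ)))
        (Measurable.of_discrete (f := (Int.cast : ℤ → ℝ))))
      (fun i => (hident i).comp (Measurable.of_discrete (f := (Int.cast : ℤ → ℝ))))
    exact this
  have key : ∀ᵐ ω ∂μ, ω ∈ {ω | ∃ m, S X m ω = -(j : ℤ) ∧ ∀ l, l < m → -(j : ℤ) < S X l ω} := by
    filter_upwards [hskip', hslln] with ω h1 h2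
    have hex : ∃ n, S X n ω ≤ -(j : ℤ) := by
      have hc2 : c / 2 < 0 := by linarith
      have hev1 : ∀ᶠ n : ℕ in atTop, (∑ i ∈ Finset.range n, (X i ω : ℝ)) / n ≤ c / 2 :=
        h2.eventually (eventually_le_nhds (by linarith : c < c / 2))
      have hev2 : Tendsto (fun n : ℕ => (n : ℝ) * (c / 2)) atTop atBot :=
        Tendsto.atTop_mul_const_of_neg hc2 tendsto_natCast_atTop_atTop
      have hev3 : ∀ᶠ n : ℕ in atTop, (n : ℝ) * (c / 2) ≤ -(j : ℝ) :=
        hev2.eventually_le_atBot _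
      have hev4 : ∀ᶠ n : ℕ in atTop, (1 : ℕ) ≤ n := eventually_ge_atTop 1
      have : ∀ᶠ n : ℕ in atTop, S X n ω ≤ -(j : ℤ) := by
        filter_upwards [hev1, hev3, hev4] with n e1 e3 e4
        have hn : (0 : ℝ) < n := by exact_mod_cast e4
        have hcast : ((S X n ω : ℤ) : ℝ) = ∑ i ∈ Finset.range n, (X i ω : ℝ) := by
          simp [S]
        have hle : ((S X n ω : ℤ) : ℝ) ≤ (n : ℝ) * (c / 2) := by
          rw [hcast]
          calc ∑ i ∈ Finset.range n, (X i ω : ℝ)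
              = ((∑ i ∈ Finset.range n, (X i ω : ℝ)) / n) * n := by field_simp
            _ ≤ (c / 2) * n := by
                apply mul_le_mul_of_nonneg_right e1 (le_of_lt hn)
            _ = (n : ℝ) * (c / 2) := by ring
        have : ((S X n ω : ℤ) : ℝ) ≤ -(j : ℝ) := le_trans hle e3
        exact_mod_cast this
      exact this.exists
    classical
    set m := Nat.find hex with hm
    have hmle : S X m ω ≤ -(j : ℤ) := Nat.find_spec hex
    have hlt : ∀ l, l < m → -(j : ℤ) < S X l ω := by
      intro l hl
      have := Nat.find_min hex hl
      omega
    clear_value m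
    have hm0 : m ≠ 0 := by
      intro h0
      have : S X 0 ω = 0 := by simp [S]
      rw [h0] at hmle
      omega
    obtain ⟨m', rfl⟩ : ∃ m', m = m' + 1 := ⟨m - 1, by omega⟩
    have hstep : S X (m' + 1) ω = S X m' ω + X m' ω := by
      simp [S, Finset.sum_range_succ]
    have hprev : -(j : ℤ) < S X m' ω := hlt m' (by omega)
    have hXm : -1 ≤ X m' ω := h1 m'
    have heq : S X (m' + 1) ω = -(j : ℤ) := by omega
    exact ⟨m' + 1, heq, hlt⟩
  have h := measure_congr (Filter.eventuallyEq_univ.2 key)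
  simp only [Set.setOf_mem_eq] at h
  rw [h, measure_univ]

/-! event sets -/

def ASet (X : ℕ → Ω → ℤ) (k : ℕ) (n : ℕ) : Set Ω :=
  {ω | 0 < n ∧ (∀ m, 0 < m → m < n → S X m ω < 0) ∧ 0 ≤ S X n ω ∧ X (n - 1) ω = (k : ℤ)}

def Btilde (X : ℕ → Ω → ℤ) (k N : ℕ) : Set Ω :=
  {ω | (∀ i, 0 < i → i ≤ N → S X i ω < 0) ∧ -(k : ℤ) ≤ S X N ω}

def Dtilde (X : ℕ → Ω → ℤ) (j N : ℕ) : Set Ω :=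
  {ω | (∀ i, 0 < i → i ≤ N → S X i ω < 0) ∧ S X N ω = -(j : ℤ)}

def Cev (X : ℕ → Ω → ℤ) (j N : ℕ) : Set Ω :=
  {ω | S X N ω = -(j : ℤ) ∧ ∀ l, l < N → -(j : ℤ) < S X l ω}

def Bset (n k : ℕ) : Set (Fin n → ℤ) :=
  {f | (∀ i, 0 < i → i ≤ n → PS n i f < 0) ∧ -(k : ℤ) ≤ PS n n f}

def Dset (n j : ℕ) : Set (Fin n → ℤ) :=
  {f | (∀ i, 0 < i → i ≤ n → PS n i f < 0) ∧ PS n n f = -(j : ℤ)}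

lemma measurableSet_PSforall (n : ℕ) :
    MeasurableSet {f : Fin n → ℤ | ∀ i, 0 < i → i ≤ n → PS n i f < 0} := by
  have : {f : Fin n → ℤ | ∀ i, 0 < i → i ≤ n → PS n i f < 0}
      = ⋂ (i : ℕ) (_ : 0 < i) (_ : i ≤ n), PS n i ⁻¹' {z : ℤ | z < 0} := by
    ext f; simp [Set.mem_iInter]
  rw [this]
  exact MeasurableSet.iInter fun i => MeasurableSet.iInter fun _ =>
    MeasurableSet.iInter fun _ => (measurable_PS n i) MeasurableSet.of_discrete

lemma measurableSet_Bset (n k : ℕ) : MeasurableSet (Bset n k) := by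
  have : Bset n k = {f : Fin n → ℤ | ∀ i, 0 < i → i ≤ n → PS n i f < 0}
      ∩ PS n n ⁻¹' {z : ℤ | -(k : ℤ) ≤ z} := by
    ext f; simp [Bset, Set.mem_inter_iff]
  rw [this]
  exact (measurableSet_PSforall n).inter ((measurable_PS n n) MeasurableSet.of_discrete)

lemma measurableSet_Dset (n j : ℕ) : MeasurableSet (Dset n j) := by
  have : Dset n j = {f : Fin n → ℤ | ∀ i, 0 < i → i ≤ n → PS n i f < 0}
      ∩ PS n n ⁻¹' {(-(j : ℤ))} := by
    ext f; simp [Dset, Set.mem_inter_iff]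
  rw [this]
  exact (measurableSet_PSforall n).inter ((measurable_PS n n) MeasurableSet.of_discrete)

lemma tuple_pre_Bset (k N : ℕ) :
    (fun ω (i : Fin N) => X (i : ℕ) ω) ⁻¹' Bset N k = Btilde X k N := by
  ext ω
  simp only [Set.mem_preimage, Bset, Btilde, Set.mem_setOf_eq]
  constructor
  · rintro ⟨h1, h2⟩
    rw [PS_id N N le_rfl ω] at h2
    exact ⟨fun i hi1 hi2 => by have := h1 i hi1 hi2; rwa [PS_id N i hi2 ω] at this, h2⟩
  · rintro ⟨h1, h2⟩
    rw [← PS_id (X := X) N N le_rfl ω] at h2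
    exact ⟨fun i hi1 hi2 => by rw [PS_id N i hi2 ω]; exact h1 i hi1 hi2, h2⟩

lemma tuple_pre_Dset (j N : ℕ) :
    (fun ω (i : Fin N) => X (i : ℕ) ω) ⁻¹' Dset N j = Dtilde X j N := by
  ext ω
  simp only [Set.mem_preimage, Dset, Dtilde, Set.mem_setOf_eq]
  constructor
  · rintro ⟨h1, h2⟩
    rw [PS_id N N le_rfl ω] at h2
    exact ⟨fun i hi1 hi2 => by have := h1 i hi1 hi2; rwa [PS_id N i hi2 ω] at this, h2⟩
  · rintro ⟨h1, h2⟩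
    rw [← PS_id (X := X) N N le_rfl ω] at h2
    exact ⟨fun i hi1 hi2 => by rw [PS_id N i hi2 ω]; exact h1 i hi1 hi2, h2⟩

lemma revtuple_pre_Dset (j N : ℕ) :
    (fun ω (i : Fin N) => X (N - 1 - (i : ℕ)) ω) ⁻¹' Dset N j = Cev X j N := by
  have hS0 : ∀ ω : Ω, S X 0 ω = 0 := fun ω => by simp [S]
  ext ω
  simp only [Set.mem_preimage, Dset, Cev, Set.mem_setOf_eq]
  constructor
  · rintro ⟨h1, h2⟩
    rw [PS_rev N N le_rfl ω, Nat.sub_self, hS0 ω, sub_zero] at h2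
    refine ⟨h2, fun l hl => ?_⟩
    have := h1 (N - l) (by omega) (by omega)
    rw [PS_rev N (N - l) (by omega) ω] at this
    have hNl : N - (N - l) = l := by omega
    rw [hNl] at this
    omega
  · rintro ⟨h2, h1⟩
    constructor
    · intro i hi1 hi2
      rw [PS_rev N i hi2 ω]
      have := h1 (N - i) (by omega)
      omega
    · rw [PS_rev N N le_rfl ω, Nat.sub_self, hS0 ω, sub_zero]
      exact h2

end RecordAux

namespace RecordAux2

open RecordAux

variable {Ω : Type*} [MeasurableSpace Ω] {X : ℕ → Ω → ℤ}

lemma measurableSet_Sforall (hmeas : ∀ n, Measurable (X n)) (N : ℕ) :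
    MeasurableSet {ω : Ω | ∀ i, 0 < i → i ≤ N → S X i ω < 0} := by
  have : {ω : Ω | ∀ i, 0 < i → i ≤ N → S X i ω < 0}
      = ⋂ (i : ℕ) (_ : 0 < i) (_ : i ≤ N), S X i ⁻¹' {z : ℤ | z < 0} := by
    ext ω; simp [Set.mem_iInter]
  rw [this]
  exact MeasurableSet.iInter fun i => MeasurableSet.iInter fun _ =>
    MeasurableSet.iInter fun _ => (measurable_S hmeas i) MeasurableSet.of_discrete

lemma measurableSet_Dtilde (hmeas : ∀ n, Measurable (X n)) (j N : ℕ) :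
    MeasurableSet (Dtilde X j N) := by
  have : Dtilde X j N = {ω : Ω | ∀ i, 0 < i → i ≤ N → S X i ω < 0}
      ∩ S X N ⁻¹' {(-(j : ℤ))} := by
    ext ω; simp [Dtilde, Set.mem_inter_iff]
  rw [this]
  exact (measurableSet_Sforall hmeas N).inter ((measurable_S hmeas N) MeasurableSet.of_discrete)

lemma measurableSet_Cev (hmeas : ∀ n, Measurable (X n)) (j N : ℕ) :
    MeasurableSet (Cev X j N) := by
  have : Cev X j N = S X N ⁻¹' {(-(j : ℤ))}
      ∩ ⋂ (l : ℕ) (_ : l < N), S X l ⁻¹' {z : ℤ | -(j : ℤ) < z} := by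
    ext ω; simp [Cev, Set.mem_iInter, Set.mem_inter_iff]
  rw [this]
  exact ((measurable_S hmeas N) MeasurableSet.of_discrete).inter
    (MeasurableSet.iInter fun l => MeasurableSet.iInter fun _ =>
      (measurable_S hmeas l) MeasurableSet.of_discrete)

lemma measurableSet_ASet (hmeas : ∀ n, Measurable (X n)) (k n : ℕ) :
    MeasurableSet (ASet X k n) := by
  have : ASet X k n = ({ω : Ω | 0 < n} ∩ {ω : Ω | ∀ i, 0 < i → i ≤ n - 1 → S X i ω < 0})
      ∩ (S X n ⁻¹' {z : ℤ | 0 ≤ z} ∩ X (n - 1) ⁻¹' {(k : ℤ)}) := by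
    ext ω
    simp only [ASet, Set.mem_inter_iff, Set.mem_setOf_eq, Set.mem_preimage,
      Set.mem_singleton_iff]
    constructor
    · rintro ⟨h0, h1, h2, h3⟩
      exact ⟨⟨h0, fun i hi1 hi2 => h1 i hi1 (by omega)⟩, h2, h3⟩
    · rintro ⟨⟨h0, h1⟩, h2, h3⟩
      exact ⟨h0, fun i hi1 hi2 => h1 i hi1 (by omega), h2, h3⟩
  rw [this]
  exact ((MeasurableSet.const _).inter (measurableSet_Sforall hmeas (n - 1))).inter
    (((measurable_S hmeas n) MeasurableSet.of_discrete).inter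
      ((hmeas (n - 1)) MeasurableSet.of_discrete))

theorem main {μ : Measure Ω} [IsProbabilityMeasure μ]
    (hmeas : ∀ n, Measurable (X n))
    (hindep : iIndepFun X μ)
    (hident : ∀ n, IdentDistrib (X n) (X 0) μ μ)
    (hskip : ∀ᵐ ω ∂μ, -1 ≤ X 0 ω)
    (hint : Integrable (fun ω => (X 0 ω : ℝ)) μ)
    (hmean : ∫ ω, (X 0 ω : ℝ) ∂μ < 0)
    (k : ℕ) :
    μ {ω | ∃ n : ℕ, 0 < n ∧
        (∀ m : ℕ, 0 < m → m < n → ∑ l ∈ Finset.range m, X l ω < 0) ∧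
        0 ≤ ∑ l ∈ Finset.range n, X l ω ∧ X (n - 1) ω = (k : ℤ)} =
      ((k : ℝ≥0∞) + 1) * μ {ω | X 0 ω = (k : ℤ)} := by
  classical
  set p := μ {ω | X 0 ω = (k : ℤ)} with hp
  -- the target set as a disjoint union
  have hU : {ω : Ω | ∃ n : ℕ, 0 < n ∧
      (∀ m : ℕ, 0 < m → m < n → ∑ l ∈ Finset.range m, X l ω < 0) ∧
      0 ≤ ∑ l ∈ Finset.range n, X l ω ∧ X (n - 1) ω = (k : ℤ)} = ⋃ n, ASet X k n := by
    ext ω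
    simp only [Set.mem_iUnion, ASet, Set.mem_setOf_eq, S]
  have hAd : Pairwise (Function.onFun Disjoint (ASet X k)) := by
    have key : ∀ a b : ℕ, a < b → Disjoint (ASet X k a) (ASet X k b) := by
      intro a b hab
      rw [Set.disjoint_left]
      rintro ω ⟨ha0, _, has, _⟩ ⟨_, hbm, _, _⟩
      exact absurd has (not_le.2 (hbm a ha0 hab))
    intro a b hab
    rcases hab.lt_or_gt with h | h
    · exact key a b h
    · exact (key b a h).symm
  have hA0 : ASet X k 0 = ∅ := by
    ext ω; simp [ASet]
  have hA1 : ASet X k 1 = {ω | X 0 ω = (k : ℤ)} := by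
    ext ω
    simp only [ASet, Set.mem_setOf_eq]
    constructor
    · rintro ⟨-, -, -, h⟩
      exact h
    · intro h
      refine ⟨Nat.one_pos, fun m hm1 hm2 => absurd hm2 (by omega), ?_, h⟩
      have h1 : S X 1 ω = X 0 ω := by simp [S]
      rw [h1, h]
      exact Int.natCast_nonneg k
  have hA2 : ∀ m : ℕ, ASet X k (m + 2) = Btilde X k (m + 1) ∩ X (m + 1) ⁻¹' {(k : ℤ)} := by
    intro m
    ext ω
    simp only [ASet, Btilde, Set.mem_inter_iff, Set.mem_setOf_eq, Set.mem_preimage,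
      Set.mem_singleton_iff]
    have hstep : S X (m + 2) ω = S X (m + 1) ω + X (m + 1) ω := by
      simp [S, Finset.sum_range_succ]
    constructor
    · rintro ⟨-, h1, h2, h3⟩
      have h3' : X (m + 1) ω = (k : ℤ) := h3
      exact ⟨⟨fun i hi1 hi2 => h1 i hi1 (by omega), by omega⟩, h3'⟩
    · rintro ⟨⟨h1, h2⟩, h3⟩
      exact ⟨by omega, fun i hi1 hi2 => h1 i hi1 (by omega), by omega, h3⟩
  have hpre0 : X 0 ⁻¹' {(k : ℤ)} = {ω | X 0 ω = (k : ℤ)} := rfl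
  have hA2' : ∀ m : ℕ, μ (ASet X k (m + 2)) = μ (Btilde X k (m + 1)) * p := by
    intro m
    rw [hA2 m, ← tuple_pre_Bset (X := X) k (m + 1),
      factorization hmeas hindep hident (m + 1) _ (measurableSet_Bset (m + 1) k) (k : ℤ),
      tuple_pre_Bset, hpre0, hp]
  have hmD := measurableSet_Dtilde (X := X) hmeas
  have hB : ∀ N : ℕ, 0 < N →
      μ (Btilde X k N) = ∑ j ∈ Finset.range k, μ (Dtilde X (j + 1) N) := by
    intro N hN
    have hun : Btilde X k N = ⋃ j ∈ Finset.range k, Dtilde X (j + 1) N := by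
      ext ω
      simp only [Btilde, Dtilde, Set.mem_setOf_eq, Set.mem_iUnion, Finset.mem_range,
        exists_prop]
      constructor
      · rintro ⟨h1, h2⟩
        have hneg : S X N ω < 0 := h1 N hN le_rfl
        exact ⟨(-(S X N ω) - 1).toNat, by omega, h1, by omega⟩
      · rintro ⟨j, hj, h1, h2⟩
        exact ⟨h1, by omega⟩
    have hdisjD : (↑(Finset.range k) : Set ℕ).PairwiseDisjoint
        (fun j => Dtilde X (j + 1) N) := by
      intro a _ b _ hab
      rw [Function.onFun, Set.disjoint_left]
      rintro ω ⟨_, ha2⟩ ⟨_, hb2⟩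
      exact hab (by omega)
    rw [hun, measure_biUnion_finset hdisjD fun j _ => hmD (j + 1) N]
  have hD : ∀ j N : ℕ, μ (Dtilde X j N) = μ (Cev X j N) := by
    intro j N
    have hinj : Function.Injective (fun i : Fin N => N - 1 - (i : ℕ)) := by
      intro a b hab
      have h' : N - 1 - (a : ℕ) = N - 1 - (b : ℕ) := hab
      have ha := a.isLt
      have hb := b.isLt
      exact Fin.ext (by omega)
    rw [← tuple_pre_Dset (X := X) j N, ← revtuple_pre_Dset (X := X) j N,
      measure_tuple_preimage hmeas hindep hident N _ Fin.val_injective _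
        (measurableSet_Dset N j),
      measure_tuple_preimage hmeas hindep hident N (fun i : Fin N => N - 1 - (i : ℕ)) hinj _
        (measurableSet_Dset N j)]
  have hCd : ∀ j : ℕ, Pairwise (Function.onFun Disjoint (Cev X j)) := by
    intro j
    have key : ∀ a b : ℕ, a < b → Disjoint (Cev X j a) (Cev X j b) := by
      intro a b hab
      rw [Set.disjoint_left]
      rintro ω ⟨ha1, _⟩ ⟨_, hb2⟩
      have := hb2 a hab
      omega
    intro a b hab
    rcases hab.lt_or_gt with h | h
    · exact key a b h
    · exact (key b a h).symm
  have hCsum : ∀ j : ℕ, 0 < j → ∑' N, μ (Cev X j N) = 1 := by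
    intro j hj
    rw [← measure_iUnion (hCd j) (fun N => measurableSet_Cev hmeas j N)]
    have hU' : ⋃ N, Cev X j N
        = {ω | ∃ m, S X m ω = -(j : ℤ) ∧ ∀ l, l < m → -(j : ℤ) < S X l ω} := by
      ext ω; simp [Cev]
    rw [hU']
    exact hits hindep hident hskip hint hmean j hj
  have hC0 : ∀ j : ℕ, Cev X (j + 1) 0 = ∅ := by
    intro j
    ext ω
    simp only [Cev, Set.mem_setOf_eq, Set.mem_empty_iff_false, iff_false, not_and]
    intro h
    have h0 : S X 0 ω = 0 := by simp [S]
    omega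
  have hCsum' : ∀ j : ℕ, ∑' n, μ (Cev X (j + 1) (n + 1)) = 1 := by
    intro j
    have h := hCsum (j + 1) j.succ_pos
    rw [tsum_eq_zero_add' ENNReal.summable, hC0 j, measure_empty, zero_add] at h
    exact h
  -- assemble
  rw [hU, measure_iUnion hAd (measurableSet_ASet hmeas k)]
  rw [tsum_eq_zero_add' ENNReal.summable, hA0, measure_empty, zero_add]
  rw [tsum_eq_zero_add' ENNReal.summable]
  have hT : ∑' n, μ (ASet X k (n + 1 + 1)) = (k : ℝ≥0∞) * p := by
    have e1 : ∑' n, μ (ASet X k (n + 1 + 1)) = (∑' n, μ (Btilde X k (n + 1))) * p := by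
      rw [← ENNReal.tsum_mul_right]
      exact tsum_congr fun n => hA2' n
    have e2 : ∑' n, μ (Btilde X k (n + 1))
        = ∑ j ∈ Finset.range k, ∑' n, μ (Dtilde X (j + 1) (n + 1)) := by
      rw [← Summable.tsum_finsetSum fun j _ => ENNReal.summable]
      exact tsum_congr fun n => hB (n + 1) n.succ_pos
    have e3 : ∀ j : ℕ, ∑' n, μ (Dtilde X (j + 1) (n + 1)) = 1 := by
      intro j
      rw [← hCsum' j]
      exact tsum_congr fun n => hD (j + 1) (n + 1)
    rw [e1, e2]
    rw [Finset.sum_congr rfl fun j _ => e3 j]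
    simp [Finset.sum_const, Finset.card_range]
  rw [hA1, hT, ← hp]
  rw [add_mul, one_mul, add_comm]

end RecordAux2

open RecordAux2 in
/-- For a skip-free to the left random walk with integrable increments of negative mean,
the last increment at the weak upper record epoch `τ = inf {n > 0 : S_n ≥ 0}` satisfies
`ℙ[τ < ∞, X_{τ-1} = k] = (k+1) ℙ[X_0 = k]` for every integer `k ≥ 0`.  The event
`{τ < ∞, X_{τ-1} = k}` is written as: there is `n ≥ 1` with `S_m < 0` for all `0 < m < n`,
`S_n ≥ 0` and `X_{n-1} = k`. -/
theorem record_increment_size_biased {Ω : Type*} [MeasurableSpace Ω] (μ : Measure Ω)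
    [IsProbabilityMeasure μ] (X : ℕ → Ω → ℤ)
    (hmeas : ∀ n, Measurable (X n))
    (hindep : iIndepFun X μ)
    (hident : ∀ n, IdentDistrib (X n) (X 0) μ μ)
    (hskip : ∀ᵐ ω ∂μ, -1 ≤ X 0 ω)
    (hint : Integrable (fun ω => (X 0 ω : ℝ)) μ)
    (hmean : ∫ ω, (X 0 ω : ℝ) ∂μ < 0)
    (k : ℕ) :
    μ {ω | ∃ n : ℕ, 0 < n ∧
        (∀ m : ℕ, 0 < m → m < n → ∑ l ∈ Finset.range m, X l ω < 0) ∧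
        0 ≤ ∑ l ∈ Finset.range n, X l ω ∧ X (n - 1) ω = (k : ℤ)} =
      ((k : ℝ≥0∞) + 1) * μ {ω | X 0 ω = (k : ℤ)} := by
  exact RecordAux2.main hmeas hindep hident hskip hint hmean k
end

section
/- Let (X_n)_{n ≥ 0} be an i.i.d. sequence of integer-valued random variables with ℙ[X_0 ≥ -1] = 1, integrable and with E[X_0] < 0, and let (S_n) be the associated skip-free to the left random walk. Then the probability that the walk never attains a nonnegative value after time 0 equals minus the mean: ℙ[S_n < 0 for all n ≥ 1] = -E[X_0]. -/
open MeasureTheory ProbabilityTheory Filter Finset Topology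

namespace SkipFreeAux


/-- partial sums -/
def psum (x : ℕ → ℤ) (n : ℕ) : ℤ := ∑ l ∈ Finset.range n, x l

/-- running minimum of partial sums over times `0..n` -/
def mins (x : ℕ → ℤ) : ℕ → ℤ
  | 0 => 0
  | n + 1 => min (mins x n) (psum x (n + 1))

lemma psum_zero (x : ℕ → ℤ) : psum x 0 = 0 := by simp [psum]

lemma psum_succ (x : ℕ → ℤ) (n : ℕ) : psum x (n + 1) = psum x n + x n := by
  simp [psum, Finset.sum_range_succ]

lemma mins_le (x : ℕ → ℤ) : ∀ n, ∀ j ≤ n, mins x n ≤ psum x j := by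
  intro n
  induction n with
  | zero => intro j hj; interval_cases j; simp [mins, psum_zero]
  | succ n ih =>
    intro j hj
    rcases Nat.lt_or_ge j (n + 1) with h | h
    · exact le_trans (min_le_left _ _) (ih j (Nat.lt_succ_iff.mp h))
    · have : j = n + 1 := le_antisymm hj h
      subst this
      exact min_le_right _ _

lemma mins_mem (x : ℕ → ℤ) : ∀ n, ∃ j ≤ n, mins x n = psum x j := by
  intro n
  induction n with
  | zero => exact ⟨0, le_refl _, by simp [mins, psum_zero]⟩
  | succ n ih =>
    obtain ⟨j, hj, hje⟩ := ih
    rcases le_or_gt (mins x n) (psum x (n + 1)) with h | h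
    · refine ⟨j, hj.trans (Nat.le_succ n), ?_⟩
      rw [show mins x (n + 1) = min (mins x n) (psum x (n + 1)) from rfl, min_eq_left h, hje]
    · exact ⟨n + 1, le_refl _, by simp [mins, min_eq_right h.le]⟩

lemma mins_nonpos (x : ℕ → ℤ) (n : ℕ) : mins x n ≤ 0 := by
  simpa [psum_zero] using mins_le x n 0 (Nat.zero_le n)

lemma psum_ge (x : ℕ → ℤ) (hx : ∀ i, -1 ≤ x i) : ∀ j : ℕ, -(j : ℤ) ≤ psum x j := by
  intro j
  induction j with
  | zero => simp [psum_zero]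
  | succ n ih =>
    rw [psum_succ]
    have := hx n
    push_cast
    omega

lemma mins_ge (x : ℕ → ℤ) (hx : ∀ i, -1 ≤ x i) (n : ℕ) : -(n : ℤ) ≤ mins x n := by
  obtain ⟨j, hj, hje⟩ := mins_mem x n
  rw [hje]
  refine le_trans ?_ (psum_ge x hx j)
  omega

/-- ladder decomposition of the running minimum -/
lemma mins_eq_ladder_sum (x : ℕ → ℤ) (hx : ∀ i, -1 ≤ x i) : ∀ n,
    -mins x n = ∑ k ∈ Finset.range n,
      (if ∀ j < k + 1, psum x (k + 1) < psum x j then (1 : ℤ) else 0) := by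
  intro n
  induction n with
  | zero => simp [mins]
  | succ n ih =>
    rw [Finset.sum_range_succ, ← ih]
    rcases lt_or_ge (psum x (n + 1)) (mins x n) with h | h
    · have hladder : ∀ j < n + 1, psum x (n + 1) < psum x j := fun j hj =>
        lt_of_lt_of_le h (mins_le x n j (Nat.lt_succ_iff.mp hj))
      have h1 : psum x n - 1 ≤ psum x (n + 1) := by
        have := hx n; rw [psum_succ]; omega
      have h2 : mins x n ≤ psum x n := mins_le x n n le_rfl
      have : psum x (n + 1) = mins x n - 1 := by omega
      rw [if_pos hladder]
      show -(min (mins x n) (psum x (n + 1))) = _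
      rw [min_eq_right h.le, this]
      ring
    · have hnl : ¬ ∀ j < n + 1, psum x (n + 1) < psum x j := by
        obtain ⟨j, hj, hje⟩ := mins_mem x n
        intro hcon
        exact absurd (hcon j (Nat.lt_succ_of_le hj)) (by omega)
      rw [if_neg hnl]
      show -(min (mins x n) (psum x (n + 1))) = _
      rw [min_eq_left h]
      ring




/-- if partial sums have Cesàro slope `m < 0`, so does the running minimum -/
lemma mins_tendsto (x : ℕ → ℤ) (m : ℝ) (hm : m < 0)
    (h : Tendsto (fun n : ℕ => (psum x n : ℝ) / n) atTop (𝓝 m)) :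
    Tendsto (fun n : ℕ => (mins x n : ℝ) / n) atTop (𝓝 m) := by
  rw [Metric.tendsto_atTop] at h ⊢
  intro ε hε
  obtain ⟨N₀, hN₀⟩ := h (ε / 4) (by linarith)
  have hps : ∀ k : ℕ, N₀ ≤ k → (m - ε / 4) * k ≤ (psum x k : ℝ) := by
    intro k hk
    rcases Nat.eq_zero_or_pos k with rfl | hkpos
    · simp [psum_zero]
    · have hd := hN₀ k hk
      rw [Real.dist_eq, abs_lt] at hd
      have hkR : (0 : ℝ) < k := by positivity
      have h2 : m - ε / 4 < (psum x k : ℝ) / k := by linarith [hd.1]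
      calc (m - ε / 4) * k ≤ ((psum x k : ℝ) / k) * k := by
            exact mul_le_mul_of_nonneg_right h2.le hkR.le
        _ = (psum x k : ℝ) := by field_simp
  set K : ℝ := (mins x N₀ : ℝ) with hK
  obtain ⟨N₂, hN₂⟩ : ∃ N₂ : ℕ, K / (m - ε / 2) ≤ N₂ := exists_nat_ge _
  have hKbound : ∀ n : ℕ, N₂ ≤ n → (m - ε / 2) * n ≤ K := by
    intro n hn
    have h1 : (N₂ : ℝ) ≤ n := by exact_mod_cast hn
    have hneg : m - ε / 2 < 0 := by linarith
    have h2 := (div_le_iff_of_neg hneg).mp (hN₂.trans h1)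
    linarith [h2]
  refine ⟨max (max N₀ N₂) 1, fun n hn => ?_⟩
  have hnN₀ : N₀ ≤ n := le_trans (le_max_left _ _) (le_trans (le_max_left _ _) hn)
  have hnN₂ : N₂ ≤ n := le_trans (le_max_right _ _) (le_trans (le_max_left _ _) hn)
  have hn1 : 1 ≤ n := le_trans (le_max_right _ _) hn
  have hnR : (0 : ℝ) < n := by exact_mod_cast hn1
  have hub : (mins x n : ℝ) / n ≤ m + ε / 4 := by
    have h1 : (mins x n : ℝ) ≤ psum x n := by
      exact_mod_cast mins_le x n n le_rfl
    have hd := hN₀ n hnN₀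
    rw [Real.dist_eq, abs_lt] at hd
    have h3 : (psum x n : ℝ) / n < m + ε / 4 := by linarith [hd.2]
    calc (mins x n : ℝ) / n ≤ (psum x n : ℝ) / n := by gcongr
      _ ≤ m + ε / 4 := h3.le
  have hlb : m - ε / 2 ≤ (mins x n : ℝ) / n := by
    have hmain : (m - ε / 2) * n ≤ (mins x n : ℝ) := by
      obtain ⟨j, hj, hje⟩ := mins_mem x n
      rcases le_or_gt j N₀ with hcase | hcase
      · have h1 : mins x N₀ ≤ psum x j := mins_le x N₀ j hcase
        have h2 : K ≤ (mins x n : ℝ) := by rw [hje, hK]; exact_mod_cast h1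
        linarith [hKbound n hnN₂]
      · have h1 : (m - ε / 4) * j ≤ (psum x j : ℝ) := hps j hcase.le
        have hjn : (j : ℝ) ≤ n := by exact_mod_cast hj
        have h2 : (m - ε / 4) * n ≤ (m - ε / 4) * j := by
          apply mul_le_mul_of_nonpos_left hjn (by linarith)
        have h3 : (m - ε / 2) * n ≤ (m - ε / 4) * n := by nlinarith
        rw [hje]
        calc (m - ε / 2) * n ≤ (m - ε / 4) * j := h3.trans h2
          _ ≤ (psum x j : ℝ) := h1
    rw [le_div_iff₀ hnR]
    linarith [hmain]
  rw [Real.dist_eq, abs_lt]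
  constructor <;> linarith


variable {Ω : Type*} [MeasurableSpace Ω] (μ : Measure Ω) [IsProbabilityMeasure μ]
  (X : ℕ → Ω → ℤ)

/-- the joint law of `k` iid coordinates is the product measure -/
lemma joint_law (hmeas : ∀ n, Measurable (X n))
    (hindep : iIndepFun X μ)
    (hident : ∀ n, IdentDistrib (X n) (X 0) μ μ) (k : ℕ) :
    Measure.map (fun ω (i : Fin k) => X i ω) μ
      = Measure.pi (fun _ : Fin k => Measure.map (X 0) μ) := by
  have hV : Measurable (fun ω (i : Fin k) => X i ω) :=
    measurable_pi_lambda _ fun i => hmeas i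
  refine (Measure.pi_eq fun s hs => ?_).symm
  rw [Measure.map_apply hV (MeasurableSet.univ_pi hs)]
  classical
  set sets : ℕ → Set ℤ := fun l => if h : l < k then s ⟨l, h⟩ else Set.univ with hsets
  have hpre : (fun ω (i : Fin k) => X i ω) ⁻¹' Set.pi Set.univ s
      = ⋂ l ∈ Finset.range k, X l ⁻¹' sets l := by
    ext ω
    simp only [Set.mem_preimage, Set.mem_pi, Set.mem_univ, forall_true_left,
      Set.mem_iInter, Finset.mem_range, hsets]
    constructor
    · intro h l hl
      rw [dif_pos hl]
      exact h ⟨l, hl⟩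
    · intro h i
      have := h i.1 i.2
      rw [dif_pos i.2] at this
      simpa using this
  rw [hpre, hindep.measure_inter_preimage_eq_mul (Finset.range k)
    (fun l _ => by by_cases h : l < k <;> simp [hsets, h, hs])]
  rw [← Fin.prod_univ_eq_prod_range (fun l => μ (X l ⁻¹' sets l)) k]
  apply Finset.prod_congr rfl
  intro i _
  have h1 : sets i.1 = s i := by simp [hsets, i.2, Fin.eta]
  rw [h1, Measure.map_apply (hmeas 0) (hs i)]
  exact (hident i).measure_mem_eq (hs i)

/-- reflection invariance of the product measure -/
lemma pi_rev_preserving (ν : Measure ℤ) [IsProbabilityMeasure ν] (k : ℕ) :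
    MeasurePreserving (fun (x : Fin k → ℤ) (i : Fin k) => x (Fin.rev i))
      (Measure.pi fun _ => ν) (Measure.pi fun _ => ν) := by
  have hT : Measurable fun (x : Fin k → ℤ) (i : Fin k) => x (Fin.rev i) :=
    measurable_pi_lambda _ fun i => measurable_pi_apply _
  refine ⟨hT, (Measure.pi_eq fun s hs => ?_).symm⟩
  rw [Measure.map_apply hT (MeasurableSet.univ_pi hs)]
  have hpre : (fun (x : Fin k → ℤ) (i : Fin k) => x (Fin.rev i)) ⁻¹' Set.pi Set.univ s
      = Set.pi Set.univ (fun i => s (Fin.rev i)) := by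
    ext x
    simp only [Set.mem_preimage, Set.mem_pi, Set.mem_univ, forall_true_left]
    constructor
    · intro h i
      simpa [Fin.rev_rev] using h (Fin.rev i)
    · intro h i
      simpa [Fin.rev_rev] using h (Fin.rev i)
  rw [hpre, Measure.pi_pi]
  exact Equiv.prod_comp Fin.revPerm fun i => ν (s i)

/-- time-reversal identity: the probability that time `k` is a strict descending ladder
epoch equals the probability that the walk is negative up to time `k`. -/
lemma reversal (hmeas : ∀ n, Measurable (X n))
    (hindep : iIndepFun X μ)
    (hident : ∀ n, IdentDistrib (X n) (X 0) μ μ) (k : ℕ) :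
    μ {ω | ∀ j < k, psum (fun l => X l ω) k < psum (fun l => X l ω) j}
      = μ {ω | ∀ t, 0 < t → t ≤ k → psum (fun l => X l ω) t < 0} := by
  classical
  set ν := Measure.map (X 0) μ with hν
  haveI : IsProbabilityMeasure ν := Measure.isProbabilityMeasure_map (hmeas 0).aemeasurable
  set V : Ω → (Fin k → ℤ) := fun ω i => X i ω with hVdef
  have hV : Measurable V := measurable_pi_lambda _ fun i => hmeas i
  have hjoint : Measure.map V μ = Measure.pi (fun _ : Fin k => ν) :=
    joint_law μ X hmeas hindep hident k
  set ext : (Fin k → ℤ) → ℕ → ℤ := fun x l => if h : l < k then x ⟨l, h⟩ else 0 with hext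
  set C : Set (Fin k → ℤ) := {x | ∀ t, 0 < t → t ≤ k → psum (ext x) t < 0} with hCdef
  have hextm : ∀ t, Measurable (fun x : Fin k → ℤ => psum (ext x) t) := by
    intro t
    apply Finset.measurable_sum
    intro l _
    by_cases h : l < k
    · simpa [hext, h] using measurable_pi_apply (⟨l, h⟩ : Fin k)
    · simpa [hext, h] using measurable_const
  have hC : MeasurableSet C := by
    rw [hCdef]
    have : {x : Fin k → ℤ | ∀ t, 0 < t → t ≤ k → psum (ext x) t < 0}
        = ⋂ t, ⋂ (_ : 0 < t), ⋂ (_ : t ≤ k), {x | psum (ext x) t < 0} := by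
      ext x; simp [Set.mem_iInter]
    rw [this]
    refine MeasurableSet.iInter fun t => MeasurableSet.iInter fun _ =>
      MeasurableSet.iInter fun _ => ?_
    exact measurableSet_lt (hextm t) measurable_const
  -- the "stay negative" event is the preimage of C
  have hA : {ω | ∀ t, 0 < t → t ≤ k → psum (fun l => X l ω) t < 0} = V ⁻¹' C := by
    ext ω
    simp only [Set.mem_preimage, hCdef, Set.mem_setOf_eq]
    have hps : ∀ t ≤ k, psum (ext (V ω)) t = psum (fun l => X l ω) t := by
      intro t ht
      apply Finset.sum_congr rfl
      intro l hl
      have hlk : l < k := lt_of_lt_of_le (Finset.mem_range.mp hl) ht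
      simp [hext, hlk, hVdef]
    constructor
    · intro h t ht htk; rw [hps t htk]; exact h t ht htk
    · intro h t ht htk; rw [← hps t htk]; exact h t ht htk
  -- the ladder event is the preimage of T ⁻¹' C
  set T : (Fin k → ℤ) → (Fin k → ℤ) := fun x i => x (Fin.rev i) with hTdef
  have hB : {ω | ∀ j < k, psum (fun l => X l ω) k < psum (fun l => X l ω) j}
      = V ⁻¹' (T ⁻¹' C) := by
    ext ω
    simp only [Set.mem_preimage, hCdef, Set.mem_setOf_eq]
    have hps : ∀ t, 0 < t → t ≤ k → psum (ext (T (V ω))) t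
        = psum (fun l => X l ω) k - psum (fun l => X l ω) (k - t) := by
      intro t ht htk
      have step1 : psum (ext (T (V ω))) t = ∑ l ∈ Finset.range t, X (k - 1 - l) ω := by
        apply Finset.sum_congr rfl
        intro l hl
        have hlk : l < k := lt_of_lt_of_le (Finset.mem_range.mp hl) htk
        simp only [hext, hTdef, hVdef, dif_pos hlk]
        congr 1
        rw [Fin.val_rev]
        show k - (l + 1) = k - 1 - l
        omega
      have step2 : psum (fun l => X l ω) k - psum (fun l => X l ω) (k - t)
          = ∑ l ∈ Finset.Ico (k - t) k, X l ω := by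
        rw [Finset.sum_Ico_eq_sub _ (Nat.sub_le k t)]
        simp [psum]
      have step3 : ∑ l ∈ Finset.Ico (k - t) k, X l ω
          = ∑ l ∈ Finset.range t, X (k - t + l) ω := by
        rw [Finset.sum_Ico_eq_sum_range]
        have h5 : k - (k - t) = t := by omega
        rw [h5]
      have step4 : ∑ l ∈ Finset.range t, X (k - 1 - l) ω
          = ∑ l ∈ Finset.range t, X (k - t + l) ω := by
        rw [← Finset.sum_range_reflect (fun l => X (k - t + l) ω) t]
        apply Finset.sum_congr rfl
        intro l hl
        have : k - t + (t - 1 - l) = k - 1 - l := by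
          have := Finset.mem_range.mp hl
          omega
        rw [this]
      rw [step1, step2, step3, step4]
    constructor
    · intro h t ht htk
      rw [hps t ht htk, sub_neg]
      exact h (k - t) (by omega)
    · intro h j hj
      have := h (k - j) (by omega) (by omega)
      rw [hps (k - j) (by omega) (by omega), sub_neg] at this
      rwa [show k - (k - j) = j by omega] at this
  rw [hA, hB, ← Measure.map_apply hV hC, ← Measure.map_apply hV ((pi_rev_preserving ν k).measurable hC), hjoint]
  exact (pi_rev_preserving ν k).measure_preimage hC.nullMeasurableSet


end SkipFreeAux

open SkipFreeAux

/-- For a skip-free to the left random walk with integrable increments of negative mean,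
the probability that the walk stays negative forever after time `0` equals minus the mean:
`ℙ[S_n < 0 for all n ≥ 1] = -E[X_0]`. -/
theorem prob_stay_negative_eq_neg_mean {Ω : Type*} [MeasurableSpace Ω] (μ : Measure Ω)
    [IsProbabilityMeasure μ] (X : ℕ → Ω → ℤ)
    (hmeas : ∀ n, Measurable (X n))
    (hindep : iIndepFun X μ)
    (hident : ∀ n, IdentDistrib (X n) (X 0) μ μ)
    (hskip : ∀ᵐ ω ∂μ, -1 ≤ X 0 ω)
    (hint : Integrable (fun ω => (X 0 ω : ℝ)) μ)
    (hmean : ∫ ω, (X 0 ω : ℝ) ∂μ < 0) :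
    (μ {ω | ∀ n : ℕ, 0 < n → ∑ l ∈ Finset.range n, X l ω < 0}).toReal =
      -∫ ω, (X 0 ω : ℝ) ∂μ := by
  classical
  set m : ℝ := ∫ ω, (X 0 ω : ℝ) ∂μ with hm
  -- events
  set B : ℕ → Set Ω := fun k =>
    {ω | ∀ j < k, psum (fun l => X l ω) k < psum (fun l => X l ω) j} with hBdef
  set A : ℕ → Set Ω := fun t =>
    {ω | ∀ j, 0 < j → j ≤ t → psum (fun l => X l ω) j < 0} with hAdef
  -- measurability
  have hpsum_meas : ∀ t, Measurable (fun ω => psum (fun l => X l ω) t) := fun t =>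
    Finset.measurable_sum (Finset.range t) (fun l _ => hmeas l)
  have hA_meas : ∀ t, MeasurableSet (A t) := by
    intro t
    have : A t = ⋂ j, ⋂ (_ : 0 < j), ⋂ (_ : j ≤ t),
        {ω | psum (fun l => X l ω) j < 0} := by
      ext ω; simp [hAdef]
    rw [this]
    exact MeasurableSet.iInter fun j => MeasurableSet.iInter fun _ =>
      MeasurableSet.iInter fun _ => measurableSet_lt (hpsum_meas j) measurable_const
  have hB_meas : ∀ k, MeasurableSet (B k) := by
    intro k
    have : B k = ⋂ j, ⋂ (_ : j < k),
        {ω | psum (fun l => X l ω) k < psum (fun l => X l ω) j} := by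
      ext ω; simp [hBdef]
    rw [this]
    exact MeasurableSet.iInter fun j => MeasurableSet.iInter fun _ =>
      measurableSet_lt (hpsum_meas k) (hpsum_meas j)
  have hmins_meas : ∀ n, Measurable (fun ω => mins (fun l => X l ω) n) := by
    intro n
    induction n with
    | zero => exact measurable_const
    | succ n ih => exact Measurable.min ih (hpsum_meas (n + 1))
  -- the increments are a.s. all ≥ -1
  have hcast : Measurable (fun z : ℤ => (z : ℝ)) := measurable_from_top
  have hgood : ∀ᵐ ω ∂μ, ∀ i, -1 ≤ X i ω := by
    rw [ae_all_iff]
    intro i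
    have hs : MeasurableSet {z : ℤ | z < -1} := trivial
    have h1 : μ (X i ⁻¹' {z : ℤ | z < -1}) = μ (X 0 ⁻¹' {z : ℤ | z < -1}) :=
      (hident i).measure_mem_eq hs
    have h2 : μ (X 0 ⁻¹' {z : ℤ | z < -1}) = 0 := by
      rw [ae_iff] at hskip
      convert hskip using 2
      ext ω
      simp [Set.mem_preimage, not_le]
    rw [ae_iff]
    have h3 : {ω | ¬ -1 ≤ X i ω} = X i ⁻¹' {z : ℤ | z < -1} := by
      ext ω; simp [Set.mem_preimage, not_le]
    rw [h3, h1, h2]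
  -- strong law of large numbers
  have hslln : ∀ᵐ ω ∂μ, Filter.Tendsto
      (fun n : ℕ => (∑ i ∈ Finset.range n, ((X i ω : ℝ))) / n)
      Filter.atTop (nhds m) := by
    apply strong_law_ae_real (fun i ω => ((X i ω : ℝ)))
    · exact hint
    · intro i j hij
      exact (hindep.indepFun hij).comp hcast hcast
    · exact fun i => (hident i).comp hcast
  -- a.e. convergence of the running minimum
  have htend : ∀ᵐ ω ∂μ, Filter.Tendsto
      (fun n : ℕ => ((mins (fun l => X l ω) n : ℝ)) / n)
      Filter.atTop (nhds m) := by
    filter_upwards [hslln] with ω hω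
    apply mins_tendsto _ m hmean
    convert hω using 2 with n
    push_cast [psum]
    ring
  -- the key identity : E[-min] = sum of ladder probabilities
  have key : ∀ n : ℕ, ∫ ω, (-(mins (fun l => X l ω) n : ℝ)) ∂μ
      = ∑ k ∈ Finset.range n, (μ (B (k + 1))).toReal := by
    intro n
    have hae : (fun ω => (-(mins (fun l => X l ω) n : ℝ)))
        =ᵐ[μ] fun ω => ∑ k ∈ Finset.range n,
          Set.indicator (B (k + 1)) (fun _ => (1 : ℝ)) ω := by
      filter_upwards [hgood] with ω hω
      have h1 := mins_eq_ladder_sum (fun l => X l ω) hω n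
      have h2 : (-(mins (fun l => X l ω) n : ℝ))
          = ((∑ k ∈ Finset.range n,
            (if ∀ j < k + 1, psum (fun l => X l ω) (k + 1) < psum (fun l => X l ω) j
              then (1 : ℤ) else 0) : ℤ) : ℝ) := by
        rw [← h1]; push_cast; ring
      rw [h2]
      push_cast
      apply Finset.sum_congr rfl
      intro k _
      rw [Set.indicator_apply]
      by_cases h : ω ∈ B (k + 1)
      · rw [if_pos h]
        have h' : ∀ j < k + 1, psum (fun l => X l ω) (k + 1) < psum (fun l => X l ω) j := h
        rw [if_pos h']
      · rw [if_neg h]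
        have h' : ¬ ∀ j < k + 1,
            psum (fun l => X l ω) (k + 1) < psum (fun l => X l ω) j := h
        rw [if_neg h']
    rw [integral_congr_ae hae, integral_finset_sum]
    · apply Finset.sum_congr rfl
      intro k _
      exact integral_indicator_one (hB_meas (k + 1))
    · intro k _
      exact (integrable_const (1 : ℝ)).indicator (hB_meas (k + 1))
  -- ladder probabilities equal stay-negative probabilities
  have hrev : ∀ k : ℕ, μ (B k) = μ (A k) := fun k =>
    reversal μ X hmeas hindep hident k
  -- convergence of the stay-negative probabilities
  set q : ℝ := (μ {ω | ∀ n : ℕ, 0 < n → ∑ l ∈ Finset.range n, X l ω < 0}).toReal with hq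
  have hInter : (⋂ t : ℕ, A (t + 1))
      = {ω | ∀ n : ℕ, 0 < n → ∑ l ∈ Finset.range n, X l ω < 0} := by
    ext ω
    simp only [Set.mem_iInter, hAdef, Set.mem_setOf_eq]
    constructor
    · intro h n hn
      exact h n n hn (Nat.le_succ n)
    · intro h t j hj hjt
      exact h j hj
  have hmono : Antitone (fun t : ℕ => A (t + 1)) := by
    intro s t hst ω hω
    intro j hj hjs
    exact hω j hj (hjs.trans (by omega))
  have hqt : Filter.Tendsto (fun t : ℕ => (μ (A (t + 1))).toReal)
      Filter.atTop (nhds q) := by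
    have h1 : Filter.Tendsto (fun t : ℕ => μ (A (t + 1))) Filter.atTop
        (nhds (μ (⋂ t : ℕ, A (t + 1)))) :=
      tendsto_measure_iInter_atTop (fun t => (hA_meas (t + 1)).nullMeasurableSet)
        hmono ⟨0, measure_ne_top μ _⟩
    rw [hInter] at h1
    exact (ENNReal.tendsto_toReal (measure_ne_top μ _)).comp h1
  have hcesaro : Filter.Tendsto
      (fun n : ℕ => (∑ k ∈ Finset.range n, (μ (A (k + 1))).toReal) / n)
      Filter.atTop (nhds q) := by
    simpa [div_eq_inv_mul] using hqt.cesaro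
  -- dominated convergence for the running minimum
  have hdom : Filter.Tendsto
      (fun n : ℕ => ∫ ω, ((mins (fun l => X l ω) n : ℝ)) / n ∂μ)
      Filter.atTop (nhds m) := by
    have h := tendsto_integral_of_dominated_convergence (μ := μ)
      (F := fun (n : ℕ) ω => ((mins (fun l => X l ω) n : ℝ)) / n)
      (f := fun _ => m) (bound := fun _ => (1 : ℝ))
      (fun n => (((hcast.comp (hmins_meas n)).div_const _).aestronglyMeasurable))
      (integrable_const 1)
      ?_ ?_
    · simpa using h
    · intro n
      filter_upwards [hgood] with ω hω
      rcases Nat.eq_zero_or_pos n with rfl | hn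
      · simp [mins]
      · have h1 : mins (fun l => X l ω) n ≤ 0 := mins_nonpos _ n
        have h2 : -(n : ℤ) ≤ mins (fun l => X l ω) n := mins_ge _ hω n
        have hnR : (0 : ℝ) < n := by exact_mod_cast hn
        rw [Real.norm_eq_abs, abs_div, abs_of_pos hnR, div_le_one hnR]
        rw [abs_le]
        constructor
        · exact_mod_cast h2
        · have : (mins (fun l => X l ω) n : ℝ) ≤ 0 := by exact_mod_cast h1
          linarith
    · exact htend
  -- put everything together
  have hfinal : Filter.Tendsto
      (fun n : ℕ => (∑ k ∈ Finset.range n, (μ (A (k + 1))).toReal) / n)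
      Filter.atTop (nhds (-m)) := by
    have heq : ∀ n : ℕ, (∑ k ∈ Finset.range n, (μ (A (k + 1))).toReal) / n
        = -∫ ω, ((mins (fun l => X l ω) n : ℝ)) / n ∂μ := by
      intro n
      have h1 : ∫ ω, ((mins (fun l => X l ω) n : ℝ)) / n ∂μ
          = (∫ ω, ((mins (fun l => X l ω) n : ℝ)) ∂μ) / n := integral_div _ _
      have h2 : ∫ ω, ((mins (fun l => X l ω) n : ℝ)) ∂μ
          = -∑ k ∈ Finset.range n, (μ (B (k + 1))).toReal := by
        have h3 := key n
        rw [integral_neg] at h3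
        linarith
      rw [h1, h2]
      have h4 : ∑ k ∈ Finset.range n, (μ (B (k + 1))).toReal
          = ∑ k ∈ Finset.range n, (μ (A (k + 1))).toReal :=
        Finset.sum_congr rfl fun k _ => by rw [hrev]
      rw [h4]
      ring
    rw [show (fun n : ℕ => (∑ k ∈ Finset.range n, (μ (A (k + 1))).toReal) / n)
        = fun n : ℕ => -∫ ω, ((mins (fun l => X l ω) n : ℝ)) / n ∂μ from funext heq]
    exact hdom.neg
  exact tendsto_nhds_unique hcesaro hfinal
end

section
/- Let (Ω, F, μ) be a probability space, T : Ω → Ω an invertible ergodic measure-preserving transformation, and f : Ω → ℤ integrable with ∫ f dμ = 0; set X_n = f ∘ T^n for n ∈ ℤ. Then for μ-almost every ω, the record graph of (X_n(ω))_{n∈ℤ} is connected, and every integer has infinitely many ancestors (i.e., for every i ∈ ℤ and every n ≥ 0, R^n(i) < R^{n+1}(i)), where R is the record map of (X_n(ω)). -/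
open MeasureTheory Filter

/-- The record map of an integer-valued sequence `x : ℤ → ℤ`: `recordMap x i` is the least
`n > i` such that `∑_{l=i}^{n-1} x l ≥ 0` if such an `n` exists, and `i` otherwise. -/
noncomputable def recordMap (x : ℤ → ℤ) (i : ℤ) : ℤ := by
  classical
  exact if ∃ n, i < n ∧ 0 ≤ ∑ l ∈ Finset.Ico i n, x l then
    sInf {n : ℤ | i < n ∧ 0 ≤ ∑ l ∈ Finset.Ico i n, x l}
  else i

/-- The `n`-th iterate (`n : ℤ`) of an invertible transformation `T`. -/
def zIter {Ω : Type*} [MeasurableSpace Ω] (T : Ω ≃ᵐ Ω) (n : ℤ) (ω : Ω) : Ω :=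
  if 0 ≤ n then (⇑T)^[n.toNat] ω else (⇑T.symm)^[(-n).toNat] ω

/-- The stationary sequence `X_n(ω) = f (T^n ω)`, `n : ℤ`, realized at `ω`. -/
def statSeq {Ω : Type*} [MeasurableSpace Ω] (T : Ω ≃ᵐ Ω) (f : Ω → ℤ) (ω : Ω) : ℤ → ℤ :=
  fun n => f (zIter T n ω)

section Deterministic

variable {x : ℤ → ℤ}

/-- The record hypothesis: every index has a strictly later weak record. -/
def RecHyp (x : ℤ → ℤ) : Prop :=
  ∀ i : ℤ, ∃ n, i < n ∧ 0 ≤ ∑ l ∈ Finset.Ico i n, x l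

lemma recSet_bddBelow (i : ℤ) :
    BddBelow {n : ℤ | i < n ∧ 0 ≤ ∑ l ∈ Finset.Ico i n, x l} :=
  ⟨i, fun n hn => le_of_lt hn.1⟩

lemma recordMap_eq (H : RecHyp x) (i : ℤ) :
    recordMap x i = sInf {n : ℤ | i < n ∧ 0 ≤ ∑ l ∈ Finset.Ico i n, x l} := by
  simp only [recordMap, if_pos (H i)]

lemma recordMap_mem (H : RecHyp x) (i : ℤ) :
    i < recordMap x i ∧ 0 ≤ ∑ l ∈ Finset.Ico i (recordMap x i), x l := by
  rw [recordMap_eq H]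
  exact Int.csInf_mem (H i) (recSet_bddBelow i)

lemma lt_recordMap (H : RecHyp x) (i : ℤ) : i < recordMap x i := (recordMap_mem H i).1

lemma recordMap_le (H : RecHyp x) {i n : ℤ} (h1 : i < n)
    (h2 : 0 ≤ ∑ l ∈ Finset.Ico i n, x l) : recordMap x i ≤ n := by
  rw [recordMap_eq H]
  exact csInf_le (recSet_bddBelow i) ⟨h1, h2⟩

lemma sum_neg_of_lt_recordMap (H : RecHyp x) {i n : ℤ} (h1 : i < n)
    (h2 : n < recordMap x i) : ∑ l ∈ Finset.Ico i n, x l < 0 := by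
  by_contra h
  exact absurd (recordMap_le H h1 (not_lt.1 h)) (not_le.2 h2)

lemma merge_one (H : RecHyp x) {i j : ℤ} (h1 : i < j) (h2 : j < recordMap x i) :
    recordMap x j ≤ recordMap x i := by
  have hij : ∑ l ∈ Finset.Ico i j, x l < 0 := sum_neg_of_lt_recordMap H h1 h2
  have hsplit : ∑ l ∈ Finset.Ico i j, x l + ∑ l ∈ Finset.Ico j (recordMap x i), x l
      = ∑ l ∈ Finset.Ico i (recordMap x i), x l := by
    rw [← Finset.sum_union (Finset.Ico_disjoint_Ico_consecutive i j (recordMap x i)),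
      Finset.Ico_union_Ico_eq_Ico (le_of_lt h1) (le_of_lt h2)]
  have h0 : 0 ≤ ∑ l ∈ Finset.Ico i (recordMap x i), x l := (recordMap_mem H i).2
  exact recordMap_le H h2 (by linarith)

lemma merge (H : RecHyp x) :
    ∀ k : ℕ, ∀ i j : ℤ, i ≤ j → j < recordMap x i → recordMap x i - j ≤ (k : ℤ) →
      ∃ n : ℕ, (recordMap x)^[n] j = recordMap x i := by
  intro k
  induction k with
  | zero => intro i j h1 h2 h3; omega
  | succ k ih =>
    intro i j h1 h2 h3
    rcases eq_or_lt_of_le h1 with rfl | hlt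
    · exact ⟨1, by simp⟩
    · have hRj : recordMap x j ≤ recordMap x i := merge_one H hlt h2
      rcases eq_or_lt_of_le hRj with heq | hltR
      · exact ⟨1, by simp [heq]⟩
      · have hjR : j < recordMap x j := lt_recordMap H j
        obtain ⟨n, hn⟩ := ih i (recordMap x j) (le_of_lt (lt_trans hlt hjR)) hltR (by omega)
        exact ⟨n + 1, by rw [Function.iterate_succ_apply]; exact hn⟩

lemma le_iterate (H : RecHyp x) (i : ℤ) : ∀ m : ℕ, i + m ≤ (recordMap x)^[m] i := by
  intro m
  induction m with
  | zero => simp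
  | succ m ih =>
    rw [Function.iterate_succ_apply']
    have := lt_recordMap H ((recordMap x)^[m] i)
    push_cast
    omega

lemma connect_of_le (H : RecHyp x) {i j : ℤ} (hij : i ≤ j) :
    ∃ m n : ℕ, (recordMap x)^[m] i = (recordMap x)^[n] j := by
  have hex : ∃ m : ℕ, j < (recordMap x)^[m] i := by
    refine ⟨((j - i).toNat + 1), ?_⟩
    have := le_iterate H i ((j - i).toNat + 1)
    omega
  classical
  have hQ : j < (recordMap x)^[Nat.find hex] i := Nat.find_spec hex
  have hm₀pos : Nat.find hex ≠ 0 := by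
    intro h
    rw [h] at hQ
    simp at hQ
    omega
  obtain ⟨m, hm⟩ := Nat.exists_eq_succ_of_ne_zero hm₀pos
  rw [hm] at hQ
  have hP : (recordMap x)^[m] i ≤ j := by
    have := Nat.find_min hex (m := m) (by omega)
    omega
  rw [Function.iterate_succ_apply'] at hQ
  obtain ⟨n, hn⟩ := merge H (recordMap x ((recordMap x)^[m] i) - j).toNat ((recordMap x)^[m] i) j
    hP hQ (by omega)
  exact ⟨m + 1, n, by rw [Function.iterate_succ_apply']; exact hn.symm⟩

lemma connect (H : RecHyp x) (i j : ℤ) :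
    ∃ m n : ℕ, (recordMap x)^[m] i = (recordMap x)^[n] j := by
  rcases le_total i j with h | h
  · exact connect_of_le H h
  · obtain ⟨m, n, hmn⟩ := connect_of_le H h
    exact ⟨n, m, hmn.symm⟩

lemma ancestors (H : RecHyp x) (i : ℤ) (n : ℕ) :
    (recordMap x)^[n] i < (recordMap x)^[n + 1] i := by
  rw [Function.iterate_succ_apply']
  exact lt_recordMap H _

end Deterministic

section MET

variable {Ω : Type*} [MeasurableSpace Ω] {μ : Measure Ω} [IsProbabilityMeasure μ]
variable (T : Ω ≃ᵐ Ω) (h : Ω → ℝ)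

/-- Garsia's maximal function: `metM T h N ω = max_{0 ≤ n ≤ N} S_n h ω`. -/
noncomputable def metM : ℕ → Ω → ℝ
  | 0 => fun _ => 0
  | (N + 1) => fun ω => max (h ω + metM N (T ω)) 0

variable {T h}

lemma metM_nonneg (N : ℕ) (ω : Ω) : 0 ≤ metM T h N ω := by
  cases N with
  | zero => simp [metM]
  | succ N => exact le_max_right _ _

lemma metM_mono (N : ℕ) (ω : Ω) : metM T h N ω ≤ metM T h (N + 1) ω := by
  induction N generalizing ω with
  | zero => exact metM_nonneg 1 ω
  | succ N ih => exact max_le_max (by linarith [ih (T ω)]) le_rfl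

lemma metM_measurable (hm : Measurable h) (N : ℕ) : Measurable (metM T h N) := by
  induction N with
  | zero => exact measurable_const
  | succ N ih => exact ((hm.add (ih.comp T.measurable)).max measurable_const)

lemma metM_integrable (hm : Measurable T) (hT : MeasurePreserving T μ μ)
    (hi : Integrable h μ) (N : ℕ) : Integrable (metM T h N) μ := by
  induction N with
  | zero => exact (integrable_const 0).congr (by simp [metM])
  | succ N ih =>
    have hcomp : Integrable (fun ω => metM T h N (T ω)) μ :=
      (hT.integrable_comp_emb T.measurableEmbedding).2 ih
    exact (hi.add hcomp).pos_part

lemma birkhoffSum_le_metM (N : ℕ) : ∀ n ≤ N, ∀ ω : Ω, birkhoffSum T h n ω ≤ metM T h N ω := by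
  induction N with
  | zero =>
    intro n hn ω
    interval_cases n
    simp [metM]
  | succ N ih =>
    intro n hn ω
    match n with
    | 0 => simpa [birkhoffSum] using metM_nonneg (N + 1) ω
    | (m + 1) =>
      rw [birkhoffSum_succ']
      calc h ω + birkhoffSum T h m (T ω) ≤ h ω + metM T h N (T ω) := by
            linarith [ih m (by omega) (T ω)]
        _ ≤ metM T h (N + 1) ω := le_max_left _ _

/-- key pointwise inequality -/
lemma metM_sub_le_indicator (N : ℕ) (ω : Ω) :
    metM T h (N + 1) ω - metM T h (N + 1) (T ω) ≤
      Set.indicator {ω | 0 < metM T h (N + 1) ω} h ω := by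
  by_cases hpos : 0 < metM T h (N + 1) ω
  · have hmem : ω ∈ {ω | 0 < metM T h (N + 1) ω} := hpos
    rw [Set.indicator_of_mem hmem h]
    have hlt : 0 < h ω + metM T h N (T ω) := by
      rcases lt_max_iff.mp (show (0:ℝ) < max (h ω + metM T h N (T ω)) 0 from hpos) with h' | h'
      · exact h'
      · exact absurd h' (lt_irrefl 0)
    have heq : metM T h (N + 1) ω = h ω + metM T h N (T ω) := max_eq_left hlt.le
    rw [heq]
    linarith [metM_mono (T := T) (h := h) N (T ω)]
  · have hmem : ω ∉ {ω | 0 < metM T h (N + 1) ω} := hpos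
    rw [Set.indicator_of_notMem hmem h]
    have h1 : metM T h (N + 1) ω = 0 := le_antisymm (not_lt.1 hpos) (metM_nonneg _ _)
    rw [h1]
    linarith [metM_nonneg (T := T) (h := h) (N + 1) (T ω)]

lemma integral_indicator_nonneg (hm : Measurable h) (hT : MeasurePreserving T μ μ)
    (hi : Integrable h μ) (N : ℕ) :
    0 ≤ ∫ ω, Set.indicator {ω | 0 < metM T h (N + 1) ω} h ω ∂μ := by
  have hMi := metM_integrable T.measurable hT hi (N + 1)
  have hMcomp : Integrable (fun ω => metM T h (N + 1) (T ω)) μ :=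
    (hT.integrable_comp_emb T.measurableEmbedding).2 hMi
  have hEmeas : MeasurableSet {ω | 0 < metM T h (N + 1) ω} :=
    measurableSet_lt measurable_const (metM_measurable hm (N + 1))
  have hInd : Integrable (fun ω => Set.indicator {ω | 0 < metM T h (N + 1) ω} h ω) μ :=
    hi.indicator hEmeas
  have key : ∫ ω, (metM T h (N + 1) ω - metM T h (N + 1) (T ω)) ∂μ ≤
      ∫ ω, Set.indicator {ω | 0 < metM T h (N + 1) ω} h ω ∂μ :=
    integral_mono (hMi.sub hMcomp) hInd (fun ω => metM_sub_le_indicator N ω)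
  have heq : ∫ ω, (metM T h (N + 1) ω - metM T h (N + 1) (T ω)) ∂μ = 0 := by
    rw [integral_sub hMi hMcomp]
    rw [hT.integral_comp' (f := T) (metM T h (N + 1))]
    ring
  linarith

lemma integral_nonneg_of_ae_exists (hm : Measurable h) (hT : MeasurePreserving T μ μ)
    (hi : Integrable h μ)
    (hae : ∀ᵐ ω ∂μ, ∃ n, 1 ≤ n ∧ 0 < birkhoffSum T h n ω) : 0 ≤ ∫ ω, h ω ∂μ := by
  have hEmeas : ∀ N : ℕ, MeasurableSet {ω | 0 < metM T h (N + 1) ω} := fun N =>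
    measurableSet_lt measurable_const (metM_measurable hm (N + 1))
  have hFle : ∀ N : ℕ, ∫ ω, Set.indicator {ω | 0 < metM T h (N + 1) ω}ᶜ h ω ∂μ ≤
      ∫ ω, h ω ∂μ := by
    intro N
    have h1 : ∫ ω, h ω ∂μ = ∫ ω, Set.indicator {ω | 0 < metM T h (N + 1) ω} h ω ∂μ +
        ∫ ω, Set.indicator {ω | 0 < metM T h (N + 1) ω}ᶜ h ω ∂μ := by
      rw [← integral_add (hi.indicator (hEmeas N)) (hi.indicator (hEmeas N).compl)]
      congr 1
      ext ω
      exact (Set.indicator_self_add_compl_apply {ω | 0 < metM T h (N + 1) ω} h ω).symm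
    have h2 := integral_indicator_nonneg hm hT hi N
    linarith
  have htend : Tendsto (fun N : ℕ => ∫ ω, Set.indicator {ω | 0 < metM T h (N + 1) ω}ᶜ h ω ∂μ)
      atTop (nhds (∫ ω, (0:ℝ) ∂μ)) := by
    apply tendsto_integral_of_dominated_convergence (fun ω => |h ω|)
    · exact fun N => (hi.indicator (hEmeas N).compl).aestronglyMeasurable
    · exact hi.abs
    · intro N
      filter_upwards with ω
      simpa using norm_indicator_le_norm_self (s := {ω | 0 < metM T h (N + 1) ω}ᶜ) h ω
    · filter_upwards [hae] with ω hω
      obtain ⟨n, hn1, hn2⟩ := hω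
      have hev : (fun N : ℕ => Set.indicator {ω | 0 < metM T h (N + 1) ω}ᶜ h ω)
          =ᶠ[atTop] (fun _ => 0) := by
        filter_upwards [Filter.eventually_ge_atTop n] with N hN
        have hle : birkhoffSum T h n ω ≤ metM T h (N + 1) ω :=
          birkhoffSum_le_metM (N + 1) n (by omega) ω
        have : ω ∈ {ω | 0 < metM T h (N + 1) ω} := lt_of_lt_of_le hn2 hle
        exact Set.indicator_of_notMem (by simpa using this) h
      exact Tendsto.congr' hev.symm tendsto_const_nhds
  have htend' : Tendsto (fun N : ℕ => ∫ ω, Set.indicator {ω | 0 < metM T h (N + 1) ω}ᶜ h ω ∂μ)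
      atTop (nhds 0) := by simpa using htend
  exact le_of_tendsto htend' (Filter.Eventually.of_forall hFle)

lemma integral_nonpos_of_sums_nonpos (hErg : Ergodic (⇑T) μ) (hm : Measurable h)
    (hi : Integrable h μ)
    (hC : μ {ω | ∀ n : ℕ, 1 ≤ n → birkhoffSum T h n ω ≤ 0} ≠ 0) :
    ∫ ω, h ω ∂μ ≤ 0 := by
  by_contra hpos
  push_neg at hpos
  have hT : MeasurePreserving T μ μ := hErg.toMeasurePreserving
  set c : ℝ := (∫ ω, h ω ∂μ) / 2 with hc
  have hcpos : 0 < c := half_pos hpos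
  set D : Set Ω := {ω | ∃ B : ℕ, ∀ n : ℕ, birkhoffSum T h n ω ≤ (B:ℝ)} with hD
  have hSmeas : ∀ n : ℕ, Measurable (fun ω => birkhoffSum T h n ω) := fun n =>
    Finset.measurable_sum _ (fun k _ => hm.comp (T.measurable.iterate k))
  have hDmeas : MeasurableSet D := by
    have hDeq : D = ⋃ B : ℕ, ⋂ n : ℕ, {ω | birkhoffSum T h n ω ≤ (B:ℝ)} := by
      ext ω; simp [hD]
    rw [hDeq]
    exact MeasurableSet.iUnion fun B => MeasurableSet.iInter fun n =>
      measurableSet_le (hSmeas n) measurable_const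
  have hDinv : ⇑T ⁻¹' D = D := by
    ext ω
    simp only [Set.mem_preimage, hD, Set.mem_setOf_eq]
    constructor
    · rintro ⟨B, hB⟩
      refine ⟨⌈(B:ℝ) + h ω⌉₊, fun n => ?_⟩
      cases n with
      | zero => simpa [birkhoffSum] using (Nat.cast_nonneg _ : (0:ℝ) ≤ _)
      | succ m =>
        have h1 : birkhoffSum T h (m+1) ω = h ω + birkhoffSum T h m (T ω) :=
          birkhoffSum_succ' T h m ω
        have h2 : birkhoffSum T h (m+1) ω ≤ (B:ℝ) + h ω := by
          rw [h1]; linarith [hB m]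
        exact h2.trans (Nat.le_ceil _)
    · rintro ⟨B, hB⟩
      refine ⟨⌈(B:ℝ) - h ω⌉₊, fun n => ?_⟩
      have h1 : birkhoffSum T h n (T ω) = birkhoffSum T h (n+1) ω - h ω := by
        rw [birkhoffSum_succ' T h n ω]; ring
      rw [h1]
      exact (by linarith [hB (n+1)] : birkhoffSum T h (n+1) ω - h ω ≤ (B:ℝ) - h ω).trans
        (Nat.le_ceil _)
  have hCD : {ω | ∀ n : ℕ, 1 ≤ n → birkhoffSum T h n ω ≤ 0} ⊆ D := by
    intro ω hω
    refine ⟨0, fun n => ?_⟩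
    cases n with
    | zero => simp [birkhoffSum]
    | succ m => simpa using hω (m+1) (by omega)
  have hae : ∀ᵐ ω ∂μ, ω ∈ D := by
    rcases hErg.toPreErgodic.ae_mem_or_ae_notMem (s := D) hDmeas hDinv with h1 | h1
    · exact h1
    · exact absurd (measure_mono_null hCD (measure_eq_zero_iff_ae_notMem.2 h1)) hC
  have hint' : Integrable (fun ω => c - h ω) μ := (integrable_const c).sub hi
  have hm' : Measurable (fun ω => c - h ω) := measurable_const.sub hm
  have hbS : ∀ (n : ℕ) (ω : Ω), birkhoffSum T (fun ω => c - h ω) n ω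
      = n * c - birkhoffSum T h n ω := by
    intro n ω
    simp [birkhoffSum, Finset.sum_sub_distrib, Finset.sum_const, Finset.card_range,
      nsmul_eq_mul]
  have hae2 : ∀ᵐ ω ∂μ, ∃ n, 1 ≤ n ∧ 0 < birkhoffSum T (fun ω => c - h ω) n ω := by
    filter_upwards [hae] with ω hω
    obtain ⟨B, hB⟩ := hω
    refine ⟨⌈(B:ℝ)/c⌉₊ + 1, by omega, ?_⟩
    rw [hbS]
    have h2 : (B:ℝ) / c < ((⌈(B:ℝ)/c⌉₊ + 1 : ℕ) : ℝ) := by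
      push_cast
      linarith [Nat.le_ceil ((B:ℝ)/c)]
    have h3 : (B:ℝ) < ((⌈(B:ℝ)/c⌉₊ + 1 : ℕ) : ℝ) * c := (div_lt_iff₀ hcpos).1 h2
    linarith [hB (⌈(B:ℝ)/c⌉₊ + 1)]
  have hfin := integral_nonneg_of_ae_exists hm' hT hint' hae2
  have hint_eq : ∫ ω, (c - h ω) ∂μ = c - ∫ ω, h ω ∂μ := by
    rw [integral_sub (integrable_const c) hi, integral_const]
    simp
  rw [hint_eq] at hfin
  rw [hc] at hfin
  linarith

end MET

section MA

variable {Ω : Type*} [MeasurableSpace Ω] {μ : Measure Ω} [IsProbabilityMeasure μ]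

lemma measure_never_record_zero (T : Ω ≃ᵐ Ω) (hErg : Ergodic (⇑T) μ) (f : Ω → ℤ)
    (hf : Measurable f) (hint : Integrable (fun ω => (f ω : ℝ)) μ)
    (hmean : ∫ ω, (f ω : ℝ) ∂μ = 0) :
    μ {ω | ∀ n : ℕ, 1 ≤ n → birkhoffSum T f n ω < 0} = 0 := by
  classical
  by_contra hA
  set A : Set Ω := {ω | ∀ n : ℕ, 1 ≤ n → birkhoffSum T f n ω < 0} with hAdef
  have hZmeas : ∀ n : ℕ, Measurable (fun ω => birkhoffSum T f n ω) := fun n =>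
    Finset.measurable_sum _ (fun k _ => hf.comp (T.measurable.iterate k))
  have hAmeas : MeasurableSet A := by
    have hAeq : A = ⋂ n : ℕ, ⋂ _h : 1 ≤ n, {ω | birkhoffSum T f n ω < 0} := by
      ext ω; simp [hAdef]
    rw [hAeq]
    exact MeasurableSet.iInter fun n => MeasurableSet.iInter fun _ =>
      (hZmeas n) (show MeasurableSet {z : ℤ | z < 0} from trivial)
  set g : Ω → ℝ := fun ω => (f ω : ℝ) + Set.indicator A (fun _ => (1:ℝ)) ω with hg
  have hgm : Measurable g :=
    (measurable_from_top.comp hf).add (measurable_const.indicator hAmeas)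
  have hgi : Integrable g μ := hint.add ((integrable_const 1).indicator hAmeas)
  have hIg : ∫ ω, g ω ∂μ = (μ A).toReal := by
    rw [hg]
    rw [integral_add hint ((integrable_const 1).indicator hAmeas), hmean, zero_add,
      integral_indicator_const (1:ℝ) hAmeas, smul_eq_mul, mul_one]
    rfl
  have hIgpos : 0 < ∫ ω, g ω ∂μ := by
    rw [hIg]; exact ENNReal.toReal_pos hA (measure_ne_top μ A)
  have key : ∀ n : ℕ, 1 ≤ n → ∀ ω ∈ A, birkhoffSum T f n ω +
      (((Finset.range n).filter (fun k => (⇑T)^[k] ω ∈ A)).card : ℤ) ≤ 0 := by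
    intro n
    induction n using Nat.strong_induction_on with
    | _ n ih =>
      intro hn ω hω
      set J := (Finset.range n).filter (fun k => (⇑T)^[k] ω ∈ A) with hJ
      have h0J : (0:ℕ) ∈ J := by
        rw [hJ, Finset.mem_filter, Finset.mem_range]
        exact ⟨by omega, by simpa using hω⟩
      have hJne : J.Nonempty := ⟨0, h0J⟩
      have hjJ : J.max' hJne ∈ J := J.max'_mem hJne
      set j := J.max' hJne with hj
      have hjn : j < n := Finset.mem_range.1 (Finset.mem_filter.1 hjJ).1
      have hjA : (⇑T)^[j] ω ∈ A := (Finset.mem_filter.1 hjJ).2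
      rcases Nat.eq_zero_or_pos j with hj0 | hjpos
      · have hJ0 : J = {0} := by
          apply Finset.Subset.antisymm
          · intro k hk
            have hkj := J.le_max' k hk
            rw [← hj] at hkj
            simp only [Finset.mem_singleton]
            omega
          · intro k hk
            rw [Finset.mem_singleton] at hk
            exact hk ▸ h0J
        have hcard : J.card = 1 := by rw [hJ0]; simp
        have hneg : birkhoffSum T f n ω < 0 := hω n hn
        omega
      · have hsplit : birkhoffSum T f n ω =
            birkhoffSum T f j ω + birkhoffSum T f (n - j) ((⇑T)^[j] ω) := by
          have hadd := birkhoffSum_add T f j (n - j) ω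
          rw [Nat.add_sub_cancel' (le_of_lt hjn)] at hadd
          exact hadd
        have hIH := ih j hjn hjpos ω hω
        have htail : birkhoffSum T f (n - j) ((⇑T)^[j] ω) < 0 := hjA (n - j) (by omega)
        have hJeq : J = insert j ((Finset.range j).filter (fun k => (⇑T)^[k] ω ∈ A)) := by
          ext k
          simp only [hJ, Finset.mem_filter, Finset.mem_range, Finset.mem_insert]
          constructor
          · rintro ⟨hk1, hk2⟩
            have hkj := J.le_max' k (by rw [hJ, Finset.mem_filter, Finset.mem_range]; exact ⟨hk1, hk2⟩)
            rw [← hj] at hkj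
            rcases eq_or_lt_of_le hkj with heq | hlt
            · left; exact heq
            · right; exact ⟨hlt, hk2⟩
          · rintro (rfl | ⟨hk1, hk2⟩)
            · exact ⟨hjn, hjA⟩
            · exact ⟨lt_trans hk1 hjn, hk2⟩
        have hjnotmem : j ∉ (Finset.range j).filter (fun k => (⇑T)^[k] ω ∈ A) := by
          simp
        have hcard : J.card = ((Finset.range j).filter (fun k => (⇑T)^[k] ω ∈ A)).card + 1 := by
          rw [hJeq, Finset.card_insert_of_notMem hjnotmem]
        omega
  have hAC : A ⊆ {ω | ∀ n : ℕ, 1 ≤ n → birkhoffSum T g n ω ≤ 0} := by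
    intro ω hω n hn
    have hsum : birkhoffSum T g n ω = ((birkhoffSum T f n ω : ℤ) : ℝ) +
        ((((Finset.range n).filter (fun k => (⇑T)^[k] ω ∈ A)).card : ℕ) : ℝ) := by
      rw [show birkhoffSum T g n ω = ∑ k ∈ Finset.range n, g ((⇑T)^[k] ω) from rfl]
      simp only [hg]
      rw [Finset.sum_add_distrib]
      congr 1
      · push_cast [birkhoffSum]
        rfl
      · simp only [Set.indicator_apply]
        rw [Finset.sum_boole]
    have hkey := key n hn ω hω
    have : ((birkhoffSum T f n ω : ℤ) : ℝ) +
        ((((Finset.range n).filter (fun k => (⇑T)^[k] ω ∈ A)).card : ℕ) : ℝ) ≤ 0 := by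
      exact_mod_cast hkey
    rw [hsum]; exact this
  have hCne : μ {ω | ∀ n : ℕ, 1 ≤ n → birkhoffSum T g n ω ≤ 0} ≠ 0 := by
    intro h0
    exact hA (le_antisymm (h0 ▸ measure_mono hAC) zero_le)
  have := integral_nonpos_of_sums_nonpos hErg hgm hgi hCne
  linarith

end MA

section ZIter

variable {Ω : Type*} [MeasurableSpace Ω] {μ : Measure Ω} (T : Ω ≃ᵐ Ω)

lemma zIter_zero (ω : Ω) : zIter T 0 ω = ω := by simp [zIter]

lemma zIter_succ (k : ℤ) (ω : Ω) : zIter T (k + 1) ω = T (zIter T k ω) := by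
  rcases le_or_gt 0 k with hk | hk
  · have hk1 : (0:ℤ) ≤ k + 1 := by omega
    simp only [zIter, if_pos hk, if_pos hk1]
    rw [show (k+1).toNat = k.toNat + 1 by omega, Function.iterate_succ_apply']
  · have hk' : ¬ (0:ℤ) ≤ k := not_le.2 hk
    rcases eq_or_lt_of_le (by omega : k + 1 ≤ 0) with heq | hlt
    · have hkm : k = -1 := by omega
      subst hkm
      norm_num [zIter]
    · simp only [zIter, if_neg (not_le.2 hlt), if_neg hk']
      rw [show (-k).toNat = (-(k+1)).toNat + 1 by omega, Function.iterate_succ_apply']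
      exact (T.apply_symm_apply _).symm

lemma zIter_add_nat (i : ℤ) (m : ℕ) (ω : Ω) :
    zIter T (i + (m:ℤ)) ω = (⇑T)^[m] (zIter T i ω) := by
  induction m with
  | zero => simp
  | succ m ih =>
    have : i + ((m:ℤ) + 1) = (i + m) + 1 := by ring
    push_cast
    rw [this, zIter_succ, ih, Function.iterate_succ_apply']

lemma zIter_measurePreserving (hT : MeasurePreserving (⇑T) μ μ) (n : ℤ) :
    MeasurePreserving (zIter T n) μ μ := by
  by_cases h : 0 ≤ n
  · have : zIter T n = (⇑T)^[n.toNat] := by funext ω; simp [zIter, h]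
    rw [this]; exact hT.iterate _
  · have : zIter T n = (⇑T.symm)^[(-n).toNat] := by funext ω; simp [zIter, h]
    rw [this]; exact (MeasurePreserving.symm T hT).iterate _

variable (f : Ω → ℤ)

lemma sum_Ico_statSeq (i : ℤ) (m : ℕ) (ω : Ω) :
    ∑ l ∈ Finset.Ico i (i + (m:ℤ)), statSeq T f ω l = birkhoffSum (⇑T) f m (zIter T i ω) := by
  induction m with
  | zero => simp [birkhoffSum]
  | succ m ih =>
    have hins : Finset.Ico i (i + ((m:ℤ) + 1)) = insert (i + (m:ℤ)) (Finset.Ico i (i + (m:ℤ))) := by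
      ext l
      simp only [Finset.mem_Ico, Finset.mem_insert]
      omega
    push_cast
    rw [hins, Finset.sum_insert (by simp)]
    rw [birkhoffSum_succ]
    have hstat : statSeq T f ω (i + (m:ℤ)) = f ((⇑T)^[m] (zIter T i ω)) := by
      show f (zIter T (i + (m:ℤ)) ω) = _
      rw [zIter_add_nat]
    rw [hstat, ih]
    ring

end ZIter

/-- Zero mean case of the phase transition: for a stationary ergodic integer-valued
sequence `X_n = f ∘ T^n` with `f` integrable of zero mean, almost surely the record graph
of `(X_n(ω))` is connected and every integer has infinitely many ancestors. -/
theorem record_graph_of_zero_mean {Ω : Type*} [MeasurableSpace Ω]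
    (μ : Measure Ω) [IsProbabilityMeasure μ] (T : Ω ≃ᵐ Ω)
    (hT : Ergodic (⇑T) μ) (f : Ω → ℤ) (hf : Measurable f)
    (hint : Integrable (fun ω => (f ω : ℝ)) μ)
    (hmean : ∫ ω, (f ω : ℝ) ∂μ = 0) :
    ∀ᵐ ω ∂μ,
      (∀ i j : ℤ, ∃ m n : ℕ,
        (recordMap (statSeq T f ω))^[m] i = (recordMap (statSeq T f ω))^[n] j) ∧
      (∀ i : ℤ, ∀ n : ℕ,
        (recordMap (statSeq T f ω))^[n] i < (recordMap (statSeq T f ω))^[n + 1] i) := by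
  have hTm : MeasurePreserving (⇑T) μ μ := hT.toMeasurePreserving
  have hA0 : μ {ω | ∀ n : ℕ, 1 ≤ n → birkhoffSum (⇑T) f n ω < 0} = 0 :=
    measure_never_record_zero T hT f hf hint hmean
  have hAmeas : MeasurableSet {ω | ∀ n : ℕ, 1 ≤ n → birkhoffSum (⇑T) f n ω < 0} := by
    have hZmeas : ∀ n : ℕ, Measurable (fun ω => birkhoffSum (⇑T) f n ω) := fun n =>
      Finset.measurable_sum _ (fun k _ => hf.comp (T.measurable.iterate k))
    have hAeq : {ω | ∀ n : ℕ, 1 ≤ n → birkhoffSum (⇑T) f n ω < 0} =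
        ⋂ n : ℕ, ⋂ _h : 1 ≤ n, {ω | birkhoffSum (⇑T) f n ω < 0} := by
      ext ω; simp
    rw [hAeq]
    exact MeasurableSet.iInter fun n => MeasurableSet.iInter fun _ =>
      (hZmeas n) (show MeasurableSet {z : ℤ | z < 0} from trivial)
  have hall : ∀ i : ℤ, ∀ᵐ ω ∂μ, ∃ n, i < n ∧ 0 ≤ ∑ l ∈ Finset.Ico i n, statSeq T f ω l := by
    intro i
    have hpre : μ (zIter T i ⁻¹' {ω | ∀ n : ℕ, 1 ≤ n → birkhoffSum (⇑T) f n ω < 0}) = 0 := by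
      rw [(zIter_measurePreserving T hTm i).measure_preimage hAmeas.nullMeasurableSet]
      exact hA0
    rw [ae_iff]
    refine measure_mono_null ?_ hpre
    intro ω hω
    simp only [Set.mem_setOf_eq, not_exists] at hω
    intro m hm
    show birkhoffSum (⇑T) f m (zIter T i ω) < 0
    rw [← sum_Ico_statSeq T f i m ω]
    have h1 := hω (i + (m:ℤ))
    have h2 : i < i + (m:ℤ) := by omega
    omega
  have haeRec : ∀ᵐ ω ∂μ, RecHyp (statSeq T f ω) := ae_all_iff.2 hall
  filter_upwards [haeRec] with ω hH
  exact ⟨fun i j => connect hH i j, fun i n => ancestors hH i n⟩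
end

section
/- Let (Ω, F, μ) be a probability space, T : Ω → Ω an invertible measure-preserving transformation (not necessarily ergodic), and f : Ω → ℤ measurable; set X_n = f ∘ T^n for n ∈ ℤ. If for μ-almost every ω the integer 0 has infinitely many ancestors in the record graph of (X_n(ω)) (i.e., R^n(0) < R^{n+1}(0) for all n ≥ 0), then for μ-almost every ω the record graph of (X_n(ω)) is connected. -/
open MeasureTheory

/-! ### Auxiliary lemmas about `recordMap` -/

lemma sum_Ico_split (x : ℤ → ℤ) {a b c : ℤ} (hab : a ≤ b) (hbc : b ≤ c) :
    ∑ l ∈ Finset.Ico a b, x l + ∑ l ∈ Finset.Ico b c, x l = ∑ l ∈ Finset.Ico a c, x l := by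
  rw [← Finset.sum_union (Finset.Ico_disjoint_Ico_consecutive a b c),
    Finset.Ico_union_Ico_eq_Ico hab hbc]

lemma recordMap_eq_self {x : ℤ → ℤ} {i : ℤ}
    (h : ¬ ∃ n, i < n ∧ 0 ≤ ∑ l ∈ Finset.Ico i n, x l) : recordMap x i = i := by
  unfold recordMap
  rw [if_neg h]

lemma recordMap_spec {x : ℤ → ℤ} {i : ℤ}
    (h : ∃ n, i < n ∧ 0 ≤ ∑ l ∈ Finset.Ico i n, x l) :
    i < recordMap x i ∧ 0 ≤ ∑ l ∈ Finset.Ico i (recordMap x i), x l := by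
  have hbdd : BddBelow {n : ℤ | i < n ∧ 0 ≤ ∑ l ∈ Finset.Ico i n, x l} :=
    ⟨i, fun n hn => le_of_lt hn.1⟩
  have hmem := Int.csInf_mem h hbdd
  unfold recordMap
  rw [if_pos h]
  exact hmem

lemma recordMap_le_s18 {x : ℤ → ℤ} {i m : ℤ} (him : i < m)
    (hm : 0 ≤ ∑ l ∈ Finset.Ico i m, x l) : recordMap x i ≤ m := by
  have h : ∃ n, i < n ∧ 0 ≤ ∑ l ∈ Finset.Ico i n, x l := ⟨m, him, hm⟩
  have hbdd : BddBelow {n : ℤ | i < n ∧ 0 ≤ ∑ l ∈ Finset.Ico i n, x l} :=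
    ⟨i, fun n hn => le_of_lt hn.1⟩
  unfold recordMap
  rw [if_pos h]
  exact csInf_le hbdd ⟨him, hm⟩

lemma recordMap_min {x : ℤ → ℤ} {i m : ℤ} (him : i < m) (hm : m < recordMap x i) :
    ∑ l ∈ Finset.Ico i m, x l < 0 := by
  by_contra hc
  push_neg at hc
  exact absurd (recordMap_le_s18 him hc) (not_le.mpr hm)

lemma recordMap_exists_of_lt {x : ℤ → ℤ} {i : ℤ} (h : i < recordMap x i) :
    ∃ n, i < n ∧ 0 ≤ ∑ l ∈ Finset.Ico i n, x l := by
  by_contra hc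
  rw [recordMap_eq_self hc] at h
  exact lt_irrefl i h

/-- Orbit points are "good": every partial sum from an intermediate point to an orbit point is
nonnegative. -/
lemma orbit_good {x : ℤ → ℤ} {i : ℤ}
    (hinc : ∀ n : ℕ, (recordMap x)^[n] i < (recordMap x)^[n + 1] i) :
    ∀ m : ℕ, ∀ l : ℤ, i ≤ l → l < (recordMap x)^[m] i →
      0 ≤ ∑ l' ∈ Finset.Ico l ((recordMap x)^[m] i), x l' := by
  intro m
  induction m with
  | zero => intro l hl1 hl2; simp at hl2; omega
  | succ m IH =>
    intro l hl1 hl2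
    set N := (recordMap x)^[m] i with hN
    have hsucc : (recordMap x)^[m + 1] i = recordMap x N := Function.iterate_succ_apply' _ _ _
    have hNN' : N < recordMap x N := by rw [← hsucc]; exact hinc m
    obtain ⟨hlt, hsum⟩ := recordMap_spec (recordMap_exists_of_lt hNN')
    rw [hsucc] at hl2 ⊢
    rcases le_or_gt l N with hcase | hcase
    · have h1 : 0 ≤ ∑ l' ∈ Finset.Ico l N, x l' := by
        rcases eq_or_lt_of_le hcase with h | h
        · subst h; simp
        · exact IH l hl1 h
      have hsplit : ∑ l' ∈ Finset.Ico l N, x l' + ∑ l' ∈ Finset.Ico N (recordMap x N), x l'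
          = ∑ l' ∈ Finset.Ico l (recordMap x N), x l' :=
        sum_Ico_split x hcase (le_of_lt hNN')
      omega
    · have hneg : ∑ l' ∈ Finset.Ico N l, x l' < 0 := recordMap_min hcase hl2
      have hsplit : ∑ l' ∈ Finset.Ico N l, x l' + ∑ l' ∈ Finset.Ico l (recordMap x N), x l'
          = ∑ l' ∈ Finset.Ico N (recordMap x N), x l' :=
        sum_Ico_split x (le_of_lt hcase) (le_of_lt hl2)
      omega

/-- A "good" point above `j` lies on the orbit of `j`. -/
lemma good_mem_orbit (x : ℤ → ℤ) :
    ∀ d : ℕ, ∀ j N : ℤ, (N - j).toNat = d → j ≤ N →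
      (∀ l, j ≤ l → l < N → 0 ≤ ∑ l' ∈ Finset.Ico l N, x l') →
      ∃ n : ℕ, (recordMap x)^[n] j = N := by
  intro d
  induction d using Nat.strong_induction_on with
  | _ d IH =>
    intro j N hd hjN hgood
    rcases eq_or_lt_of_le hjN with h | h
    · exact ⟨0, by simpa using h⟩
    · have hex : ∃ n, j < n ∧ 0 ≤ ∑ l ∈ Finset.Ico j n, x l :=
        ⟨N, h, hgood j le_rfl h⟩
      obtain ⟨hlt, _⟩ := recordMap_spec hex
      have hRle : recordMap x j ≤ N := recordMap_le_s18 h (hgood j le_rfl h)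
      have hdlt : (N - recordMap x j).toNat < d := by omega
      obtain ⟨n, hn⟩ := IH _ hdlt (recordMap x j) N rfl hRle
        (fun l hl1 hl2 => hgood l (le_trans (le_of_lt hlt) hl1) hl2)
      exact ⟨n + 1, by rw [Function.iterate_succ_apply, hn]⟩

/-- The deterministic merging lemma: if every integer has infinitely many ancestors, the record
graph is connected. -/
lemma record_merge {x : ℤ → ℤ}
    (hinc : ∀ k : ℤ, ∀ n : ℕ, (recordMap x)^[n] k < (recordMap x)^[n + 1] k) :
    ∀ i j : ℤ, ∃ m n : ℕ, (recordMap x)^[m] i = (recordMap x)^[n] j := by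
  have key : ∀ i j : ℤ, i ≤ j → ∃ m n : ℕ, (recordMap x)^[m] i = (recordMap x)^[n] j := by
    intro i j hij
    have hgrow : ∀ m : ℕ, i + m ≤ (recordMap x)^[m] i := by
      intro m
      induction m with
      | zero => simp
      | succ m IH =>
        have := hinc i m
        push_cast
        omega
    set m := (j - i).toNat with hm
    set N := (recordMap x)^[m] i with hN
    have hjN : j ≤ N := by have := hgrow m; omega
    have hgood : ∀ l, j ≤ l → l < N → 0 ≤ ∑ l' ∈ Finset.Ico l N, x l' :=
      fun l hl1 hl2 => orbit_good (hinc i) m l (le_trans hij hl1) hl2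
    obtain ⟨n, hn⟩ := good_mem_orbit x (N - j).toNat j N rfl hjN hgood
    exact ⟨m, n, hn.symm⟩
  intro i j
  rcases le_total i j with h | h
  · exact key i j h
  · obtain ⟨m, n, hmn⟩ := key j i h
    exact ⟨n, m, hmn.symm⟩

/-! ### Shift-equivariance of the record map -/

lemma sum_shift (x : ℤ → ℤ) (k a b : ℤ) :
    ∑ l ∈ Finset.Ico a b, x (l + k) = ∑ l ∈ Finset.Ico (a + k) (b + k), x l := by
  rw [← Finset.map_add_right_Ico, Finset.sum_map]
  rfl

lemma recordMap_shift (x : ℤ → ℤ) (k i : ℤ) :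
    recordMap (fun n => x (n + k)) i = recordMap x (i + k) - k := by
  by_cases h : ∃ n, i < n ∧ 0 ≤ ∑ l ∈ Finset.Ico i n, (fun n => x (n + k)) l
  · have h' : ∃ n, i + k < n ∧ 0 ≤ ∑ l ∈ Finset.Ico (i + k) n, x l := by
      obtain ⟨n, hn1, hn2⟩ := h
      refine ⟨n + k, by omega, ?_⟩
      rw [← sum_shift x k i n]
      exact hn2
    obtain ⟨hA1, hA2⟩ := recordMap_spec h
    obtain ⟨hB1, hB2⟩ := recordMap_spec h'
    set A := recordMap (fun n => x (n + k)) i with hA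
    set B := recordMap x (i + k) with hB
    have h1 : B ≤ A + k := by
      refine recordMap_le_s18 (by omega) ?_
      rw [← sum_shift x k i A]
      exact hA2
    have h2 : A ≤ B - k := by
      refine recordMap_le_s18 (by omega) ?_
      have : (B - k) + k = B := by omega
      calc (0:ℤ) ≤ ∑ l ∈ Finset.Ico (i + k) B, x l := hB2
        _ = ∑ l ∈ Finset.Ico i (B - k), x (l + k) := by rw [sum_shift x k i (B - k), this]
    omega
  · have h' : ¬ ∃ n, i + k < n ∧ 0 ≤ ∑ l ∈ Finset.Ico (i + k) n, x l := by
      intro ⟨n, hn1, hn2⟩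
      refine h ⟨n - k, by omega, ?_⟩
      have : (n - k) + k = n := by omega
      simpa [sum_shift x k i (n - k), this] using hn2
    rw [recordMap_eq_self h, recordMap_eq_self h']
    omega

lemma recordMap_iterate_shift (x : ℤ → ℤ) (k : ℤ) (n : ℕ) (i : ℤ) :
    (recordMap (fun l => x (l + k)))^[n] i = (recordMap x)^[n] (i + k) - k := by
  induction n generalizing i with
  | zero => simp
  | succ n IH =>
    rw [Function.iterate_succ_apply', Function.iterate_succ_apply', IH,
      recordMap_shift x k, sub_add_cancel]

/-! ### `zIter` lemmas -/

lemma zIter_eq_pow {Ω : Type*} [MeasurableSpace Ω] (T : Ω ≃ᵐ Ω) (n : ℤ) (ω : Ω) :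
    zIter T n ω = (T.toEquiv ^ n : Equiv.Perm Ω) ω := by
  unfold zIter
  split_ifs with h
  · have : (T.toEquiv ^ n : Equiv.Perm Ω) = T.toEquiv ^ n.toNat := by
      rw [← zpow_natCast]
      congr 1
      omega
    rw [this, ← Equiv.Perm.iterate_eq_pow]
    rfl
  · have : (T.toEquiv ^ n : Equiv.Perm Ω) = (T.toEquiv⁻¹) ^ (-n).toNat := by
      rw [← zpow_natCast (T.toEquiv⁻¹), inv_zpow, ← zpow_neg]
      congr 1
      omega
    rw [this, ← Equiv.Perm.iterate_eq_pow]
    rfl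

lemma zIter_add {Ω : Type*} [MeasurableSpace Ω] (T : Ω ≃ᵐ Ω) (a b : ℤ) (ω : Ω) :
    zIter T a (zIter T b ω) = zIter T (a + b) ω := by
  rw [zIter_eq_pow, zIter_eq_pow, zIter_eq_pow, ← Equiv.Perm.mul_apply, ← zpow_add]

lemma zIter_measurePreserving_s18 {Ω : Type*} [MeasurableSpace Ω] {μ : Measure Ω} (T : Ω ≃ᵐ Ω)
    (hT : MeasurePreserving (⇑T) μ μ) (k : ℤ) : MeasurePreserving (zIter T k) μ μ := by
  unfold zIter
  split_ifs with h
  · exact hT.iterate k.toNat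
  · exact (MeasurePreserving.symm T hT).iterate (-k).toNat

lemma statSeq_shift {Ω : Type*} [MeasurableSpace Ω] (T : Ω ≃ᵐ Ω) (f : Ω → ℤ) (k : ℤ) (ω : Ω) :
    statSeq T f (zIter T k ω) = fun n => statSeq T f ω (n + k) := by
  funext n
  unfold statSeq
  rw [zIter_add]

/-- For a stationary integer-valued sequence `X_n = f ∘ T^n` (with `T` invertible measure
preserving, not necessarily ergodic), if almost surely `0` has infinitely many ancestors in
the record graph of `(X_n(ω))` (i.e. `R^n(0) < R^{n+1}(0)` for all `n ≥ 0`), then almost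
surely the record graph of `(X_n(ω))` is connected. -/
theorem record_graph_connected_of_infinite_ancestors {Ω : Type*} [MeasurableSpace Ω]
    (μ : Measure Ω) [IsProbabilityMeasure μ] (T : Ω ≃ᵐ Ω)
    (hT : MeasurePreserving (⇑T) μ μ) (f : Ω → ℤ) (hf : Measurable f)
    (hanc : ∀ᵐ ω ∂μ, ∀ n : ℕ,
      (recordMap (statSeq T f ω))^[n] 0 < (recordMap (statSeq T f ω))^[n + 1] 0) :
    ∀ᵐ ω ∂μ, ∀ i j : ℤ, ∃ m n : ℕ,
      (recordMap (statSeq T f ω))^[m] i = (recordMap (statSeq T f ω))^[n] j := by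
  have hall : ∀ᵐ ω ∂μ, ∀ k : ℤ, ∀ n : ℕ,
      (recordMap (statSeq T f ω))^[n] k < (recordMap (statSeq T f ω))^[n + 1] k := by
    rw [ae_all_iff]
    intro k
    have hmp := zIter_measurePreserving_s18 T hT k
    have h2 := hmp.quasiMeasurePreserving.ae hanc
    filter_upwards [h2] with ω hω n
    have hω' := hω n
    rw [statSeq_shift T f k ω] at hω'
    rw [recordMap_iterate_shift (statSeq T f ω) k n 0,
      recordMap_iterate_shift (statSeq T f ω) k (n + 1) 0, zero_add] at hω'
    omega
  filter_upwards [hall] with ω h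
  exact record_merge h
end
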